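/- arXiv:math/0609340 — 4 statements merged into one kernel-verified Lean document; each statement's English description precedes it below -/
import Mathlib

section
/- There is a constant c_2 > 0 (depending on k, d, α, β, r_0) such that for all f ∈ 𝓗 and all ε > 0, μ(graph^𝐒(f)^{ε,Φ}) ≤ c_2 ε^{(d−k)w}, where w = Σ_{s=0}^{r_0} (1 − s/α) C(s+k−1, k−1). -/
open MeasureTheory Filter Set
open scoped RealInnerProductSpace

noncomputable section

abbrev Euc (n : ℕ) := EuclideanSpace ℝ (Fin n)

/-- The sup-norm `‖x‖_∞` of a vector. -/
def supNorm {n : ℕ} (x : Euc n) : ℝ := ⨆ i, |x i|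

/-- The unit cube `[0,1]^n`. -/
def unitCube (n : ℕ) : Set (Euc n) := {x | ∀ i, x i ∈ Set.Icc (0:ℝ) 1}

/-- The uniform probability measure on `[0,1]^n`. -/
def cubeUniform (n : ℕ) : Measure (Euc n) := volume.restrict (unitCube n)

/-- The angle between two linear subspaces of `ℝ^d`:
`max_{0 ≠ u ∈ H} min_{0 ≠ v ∈ K} arccos (⟨u,v⟩ / (‖u‖‖v‖))`. -/
def subAngle {d : ℕ} (H K : Submodule ℝ (Euc d)) : ℝ :=
  ⨆ u : {u : Euc d // u ∈ H ∧ u ≠ 0},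
    ⨅ v : {v : Euc d // v ∈ K ∧ v ≠ 0},
      Real.arccos (⟪u.1, v.1⟫ / (‖u.1‖ * ‖v.1‖))

/-- The Grassmannian `G(k,d)` of `k`-dimensional linear subspaces of `ℝ^d`. -/
def Grass (k d : ℕ) := {H : Submodule ℝ (Euc d) // Module.finrank ℝ H = k}

/-- The ball `B(H,ε)` in the Grassmannian, for the angle metric. -/
def GrassBall {k d : ℕ} (H : Grass k d) (ε : ℝ) : Set (Grass k d) :=
  {K | subAngle H.1 K.1 ≤ ε}

instance {k d : ℕ} : MeasurableSpace (Grass k d) :=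
  MeasurableSpace.generateFrom {S | ∃ H ε, S = GrassBall H ε}

/-- Action of an orthogonal transformation on the Grassmannian. -/
def rotGrass {k d : ℕ} (Q : Euc d ≃ₗᵢ[ℝ] Euc d) (H : Grass k d) : Grass k d :=
  ⟨H.1.map (Q.toLinearEquiv : Euc d →ₗ[ℝ] Euc d),
    (LinearEquiv.finrank_map_eq _ _).trans H.2⟩

/-- A measure on the Grassmannian invariant under the orthogonal group `O(d)`. -/
def IsOrthInvariant {k d : ℕ} (lam : Measure (Grass k d)) : Prop :=
  ∀ Q : Euc d ≃ₗᵢ[ℝ] Euc d, ∀ S : Set (Grass k d), MeasurableSet S →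
    lam (rotGrass Q ⁻¹' S) = lam S

/-- Partial derivative `∂_s f`. -/
def pd {k n : ℕ} (s : Fin k) (f : Euc k → Euc n) : Euc k → Euc n :=
  fun x => fderiv ℝ f x (EuclideanSpace.single s 1)

/-- Iterated partial derivatives along a list of directions. -/
def pdIter {k n : ℕ} (l : List (Fin k)) (f : Euc k → Euc n) : Euc k → Euc n :=
  l.foldr pd f

/-- The list of directions associated to a multi-index. -/
def listOf {k : ℕ} (s : Fin k → ℕ) : List (Fin k) :=
  (List.finRange k).foldr (fun i l => List.replicate (s i) i ++ l) []

/-- Partial derivative `f^{(𝐬)}` of multi-order `𝐬`. -/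
def mderiv {k n : ℕ} (s : Fin k → ℕ) (f : Euc k → Euc n) : Euc k → Euc n :=
  pdIter (listOf s) f

/-- `r = max {m ∈ ℕ : m < α}`. -/
def rr (α : ℝ) : ℕ := sSup {m : ℕ | (m : ℝ) < α}

/-- The Hölder class `H^{k,n}(α,β)`. -/
def Holder (k n : ℕ) (α β : ℝ) : Set (Euc k → Euc n) :=
  {f | Set.MapsTo f (unitCube k) (unitCube n) ∧
    (∀ l : List (Fin k), l.length < rr α → Differentiable ℝ (pdIter l f)) ∧
    (∀ s : Fin k → ℕ, (∑ i, s i) ≤ rr α → ∀ x ∈ unitCube k, supNorm (mderiv s f x) ≤ β) ∧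
    (∀ s : Fin k → ℕ, (∑ i, s i) = rr α → ∀ x ∈ unitCube k, ∀ y ∈ unitCube k,
      supNorm (mderiv s f x - mderiv s f y) ≤ β * supNorm (x - y) ^ (α - rr α))}

/-- The tangent space `f⃗(x) = span {∂_s f(x) : s}`. -/
def tangent {k d : ℕ} (f : Euc k → Euc d) (x : Euc k) : Submodule ℝ (Euc d) :=
  Submodule.span ℝ (Set.range fun s => pd s f x)

/-- The class `𝓕` of the paper. -/
def ClassF (k d : ℕ) (β : ℝ) : Set (Euc k → Euc d) :=
  {f | Set.MapsTo f (unitCube k) (unitCube d) ∧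
    Set.InjOn f (unitCube k) ∧
    Differentiable ℝ f ∧ (∀ s, Differentiable ℝ (pd s f)) ∧
    (∀ s, ∀ x ∈ unitCube k, 1/β ≤ supNorm (pd s f x) ∧ supNorm (pd s f x) ≤ β) ∧
    (∀ s t, ∀ x ∈ unitCube k, supNorm (pd t (pd s f) x) ≤ β) ∧
    (1 < k → ∀ s, ∀ x ∈ unitCube k,
      1/(2*β*((d:ℝ) - k)) ≤ subAngle (Submodule.span ℝ {pd s f x})
        (Submodule.span ℝ ((fun t => pd t f x) '' {t | t ≠ s})))}

/-- `f` interpolates `(z, w) ∈ [0,1]^d × G(k,d)`. -/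
def InterpF {k d : ℕ} (f : Euc k → Euc d) (p : Euc d × Grass k d) : Prop :=
  ∃ x ∈ unitCube k, f x = p.1 ∧ tangent f x = p.2.1

/-- `N_n^→(𝓕) = max_{f ∈ 𝓕} #{i : f interpolates (Z_i,W_i)}`. -/
def NFmax (k d : ℕ) (β : ℝ) {n : ℕ} (ω : Fin n → Euc d × Grass k d) : ℕ :=
  ⨆ f : ClassF k d β, Nat.card {i : Fin n // InterpF f.1 (ω i)}

/-- The set `𝐒` of multi-indices of total order at most `r₀`. -/
def SIdx (k r0 : ℕ) := {s : Fin k → Fin (r0+1) // (∑ i, (s i : ℕ)) ≤ r0}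

instance (k r0 : ℕ) : Fintype (SIdx k r0) := by unfold SIdx; infer_instance

/-- The multi-index in `ℕ^k` associated to an element of `𝐒`. -/
def toMulti {k r0 : ℕ} (s : SIdx k r0) : Fin k → ℕ := fun i => (s.1 i : ℕ)

/-- The uniform probability measure on `[-β,β]^n`. -/
def boxUniform (n : ℕ) (β : ℝ) : Measure (Euc n) :=
  (ENNReal.ofReal ((2*β)^n))⁻¹ • volume.restrict {y : Euc n | ∀ j, y j ∈ Set.Icc (-β) β}

open Classical in
/-- The distribution of one observation `(X, Y^𝐒)` under the null hypothesis:
uniform on `[0,1]^k × [0,1]^{d-k} × [-β,β]^{(d-k)(|𝐒|-1)}`. -/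
def obsMeasure (k d r0 : ℕ) (β : ℝ) : Measure (Euc k × (SIdx k r0 → Euc (d-k))) :=
  (cubeUniform k).prod (Measure.pi fun s : SIdx k r0 =>
    if (∀ i, s.1 i = 0) then cubeUniform (d-k) else boxUniform (d-k) β)

/-- `f` interpolates `(x, y^𝐒)`. -/
def InterpH {k d r0 : ℕ} (f : Euc k → Euc (d-k))
    (p : Euc k × (SIdx k r0 → Euc (d-k))) : Prop :=
  ∀ s : SIdx k r0, mderiv (toMulti s) f p.1 = p.2 s

/-- `N_n^{(r₀)}(𝓗) = max_{f ∈ 𝓗} #{i : f interpolates (X_i, Y_i^𝐒)}`. -/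
def NHmax (k d r0 : ℕ) (α β : ℝ) {n : ℕ}
    (ω : Fin n → Euc k × (SIdx k r0 → Euc (d-k))) : ℕ :=
  ⨆ f : Holder k (d-k) α β, Nat.card {i : Fin n // InterpH f.1 (ω i)}

/-- `w = Σ_{s=0}^{r₀} (1 - s/α) C(s+k-1, k-1)`. -/
def wconst (k r0 : ℕ) (α : ℝ) : ℝ :=
  ∑ s ∈ Finset.range (r0+1), (1 - s/α) * (Nat.choose (s+k-1) (k-1))

/-- `ρ(r₀) = k / (k + α (d-k) w)`. -/
def rho (k d r0 : ℕ) (α : ℝ) : ℝ := k / (k + α*((d:ℝ)-k)*wconst k r0 α)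

/-- Sup-norm of a function over the unit cube. -/
def funSup {k n : ℕ} (f : Euc k → Euc n) : ℝ := ⨆ x : unitCube k, supNorm (f x.1)

/-- The discrepancy `Φ` on the Hölder class. -/
def Phi {k n : ℕ} (r0 : ℕ) (α : ℝ) (f g : Euc k → Euc n) : ℝ :=
  ⨆ s : SIdx k r0, funSup (fun x => mderiv (toMulti s) f x - mderiv (toMulti s) g x) ^
    (α / (α - ∑ i, (toMulti s i : ℝ)))

/-- The discrepancy `Φ` on the values `y^𝐒`. -/
def PhiPt {k n r0 : ℕ} (α : ℝ) (y1 y2 : SIdx k r0 → Euc n) : ℝ :=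
  ⨆ s : SIdx k r0, supNorm (y1 s - y2 s) ^ (α / (α - ∑ i, (toMulti s i : ℝ)))

/-- Concatenation `ℝ^k × ℝ^{d-k} → ℝ^d`, identifying `ℝ^d` with `ℝ^k × ℝ^{d-k}`. -/
def pairFun {k d : ℕ} (h : k ≤ d) (x : Euc k) (y : Euc (d-k)) : Euc d :=
  WithLp.toLp 2 (fun j => Fin.append x y (Fin.cast (Nat.add_sub_cancel' h).symm j))

/-- `ε = ε(n)`, the solution of `ε^{-k/α} = ε^{(d-k)w} n`. -/
def epsN (k d r0 : ℕ) (α : ℝ) (n : ℕ) : ℝ :=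
  (n:ℝ) ^ (-(α / (k + α*((d:ℝ)-k)*wconst k r0 α)))

/-- The cell `I_m` of sidelength `ε'` indexed by `m`. -/
def cellI {k : ℕ} (ε' : ℝ) (m : Fin k → ℕ) : Set (Euc k) :=
  {x | ∀ i, x i ∈ Set.Ico ((m i : ℝ) * ε') (((m i : ℝ) + 1) * ε')}

open Classical in
/-- The box `R_m = I_m × [ε/2,ε]^{d-k} × Π_{𝐬 ≠ 0} [0,ε_𝐬]^{d-k}`. -/
def Rset (k d r0 : ℕ) (α : ℝ) (ε ε' : ℝ) (m : Fin k → ℕ) :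
    Set (Euc k × (SIdx k r0 → Euc (d-k))) :=
  {p | p.1 ∈ cellI ε' m ∧ ∀ s : SIdx k r0, ∀ j,
    if (∀ i, s.1 i = 0) then p.2 s j ∈ Set.Icc (ε/2) ε
    else p.2 s j ∈ Set.Icc 0 (ε ^ (1 - (∑ i, (toMulti s i : ℝ))/α))}


/-! ### Auxiliary lemmas for Lemma 2 -/

section Aux

lemma bddAbove_lt_alpha (α : ℝ) : BddAbove {m : ℕ | (m : ℝ) < α} := by
  refine ⟨⌈α⌉₊, fun m hm => ?_⟩
  exact (Nat.lt_ceil.2 hm).le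

lemma rr_lt_alpha {α : ℝ} (hα : 1 < α) : (rr α : ℝ) < α :=
  Nat.sSup_mem ⟨0, by simpa using by linarith⟩ (bddAbove_lt_alpha α)

lemma one_le_rr {α : ℝ} (hα : 1 < α) : 1 ≤ rr α :=
  le_csSup (bddAbove_lt_alpha α) (by simpa using hα)

lemma abs_apply_le_supNorm {n : ℕ} (z : Euc n) (j : Fin n) : |z j| ≤ supNorm z :=
  le_ciSup (f := fun i => |z i|) (Set.Finite.bddAbove (Set.finite_range _)) j

lemma supNorm_nonneg {n : ℕ} (hn : 0 < n) (z : Euc n) : 0 ≤ supNorm z :=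
  le_trans (abs_nonneg _) (abs_apply_le_supNorm z ⟨0, hn⟩)

lemma measurable_pdIter {k n : ℕ} (l : List (Fin k)) (f : Euc k → Euc n)
    (hf : Measurable f) : Measurable (pdIter l f) := by
  cases l with
  | nil => exact hf
  | cons a l =>
    exact measurable_fderiv_apply_const ℝ (pdIter l f) (EuclideanSpace.single a 1)

lemma euc_box_volume {n : ℕ} (a b : Fin n → ℝ) :
    volume {z : Euc n | ∀ j, z j ∈ Set.Icc (a j) (b j)} =
      ∏ j, ENNReal.ofReal (b j - a j) := by
  have h := (EuclideanSpace.volume_preserving_symm_measurableEquiv_toLp (Fin n)).symm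
  rw [← h.map_eq, MeasurableEquiv.map_apply]
  have hpre : (MeasurableEquiv.toLp 2 (Fin n → ℝ)).symm.symm ⁻¹'
      {z : Euc n | ∀ j, z j ∈ Set.Icc (a j) (b j)} =
      Set.pi Set.univ fun j => Set.Icc (a j) (b j) := by
    ext y
    simp only [Set.mem_preimage, Set.mem_setOf_eq, Set.mem_pi, Set.mem_univ, true_imp_iff]
    rfl
  rw [hpre, volume_pi_pi]
  simp [Real.volume_Icc]

lemma measurableSet_unitCube (n : ℕ) : MeasurableSet (unitCube n) := by
  have : unitCube n = ⋂ i, (fun x : Euc n => x i) ⁻¹' Set.Icc (0:ℝ) 1 := by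
    ext x; simp [unitCube, Set.mem_iInter]
  rw [this]
  exact MeasurableSet.iInter fun i => ((measurable_pi_apply i).comp (WithLp.measurable_ofLp 2 (Fin n → ℝ))) measurableSet_Icc

lemma volume_unitCube (n : ℕ) : volume (unitCube n) = 1 := by
  have : unitCube n = {z : Euc n | ∀ j, z j ∈ Set.Icc ((fun _ => (0:ℝ)) j) ((fun _ => (1:ℝ)) j)} := rfl
  rw [this, euc_box_volume]
  simp

lemma cubeUniform_univ (n : ℕ) : cubeUniform n Set.univ = 1 := by
  rw [cubeUniform, Measure.restrict_apply_univ, volume_unitCube]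

lemma volume_betaBox {n : ℕ} (β : ℝ) (hβ : 0 < β) :
    volume {y : Euc n | ∀ j, y j ∈ Set.Icc (-β) β} = ENNReal.ofReal ((2*β)^n) := by
  have : {y : Euc n | ∀ j, y j ∈ Set.Icc (-β) β} =
      {z : Euc n | ∀ j, z j ∈ Set.Icc ((fun _ => -β) j) ((fun _ => β) j)} := rfl
  rw [this, euc_box_volume]
  rw [Finset.prod_const, Finset.card_univ, Fintype.card_fin,
    ← ENNReal.ofReal_pow (by linarith)]
  norm_num
  ring_nf

lemma boxUniform_univ {n : ℕ} (β : ℝ) (hβ : 0 < β) : boxUniform n β Set.univ = 1 := by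
  rw [boxUniform, Measure.smul_apply, Measure.restrict_apply_univ, volume_betaBox β hβ,
    smul_eq_mul, ENNReal.inv_mul_cancel]
  · exact (ENNReal.ofReal_pos.2 (by positivity)).ne'
  · exact ENNReal.ofReal_ne_top

lemma isFiniteMeasure_cubeUniform (n : ℕ) : IsFiniteMeasure (cubeUniform n) :=
  ⟨by rw [cubeUniform_univ]; exact ENNReal.one_lt_top⟩

lemma isFiniteMeasure_boxUniform {n : ℕ} (β : ℝ) (hβ : 0 < β) :
    IsFiniteMeasure (boxUniform n β) :=
  ⟨by rw [boxUniform_univ β hβ]; exact ENNReal.one_lt_top⟩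

lemma factor_le {n : ℕ} {β δ : ℝ} (hβ : 0 < β) (hδ : 0 ≤ δ) (c : Euc n)
    (ν : Measure (Euc n)) (hν : ν = cubeUniform n ∨ ν = boxUniform n β) :
    ν {z : Euc n | ∀ j, z j ∈ Set.Icc (c j - δ) (c j + δ)} ≤
      ENNReal.ofReal ((2 * max 1 (2*β)⁻¹ * δ)^n) := by
  set S : Set (Euc n) := {z : Euc n | ∀ j, z j ∈ Set.Icc (c j - δ) (c j + δ)} with hS
  have hCβ : (0:ℝ) ≤ 2 * max 1 (2*β)⁻¹ := by positivity
  have hvol : volume S = ENNReal.ofReal ((2*δ)^n) := by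
    have : S = {z : Euc n | ∀ j, z j ∈ Set.Icc ((fun j => c j - δ) j) ((fun j => c j + δ) j)} := rfl
    rw [this, euc_box_volume]
    have : ∀ j : Fin n, c j + δ - (c j - δ) = 2*δ := fun j => by ring
    simp only [this]
    rw [Finset.prod_const, Finset.card_univ, Fintype.card_fin,
      ← ENNReal.ofReal_pow (by linarith)]
  have h2δ : (2*δ)^n ≤ (2 * max 1 (2*β)⁻¹ * δ)^n := by
    apply pow_le_pow_left₀ (by linarith)
    have : (1:ℝ) ≤ max 1 (2*β)⁻¹ := le_max_left _ _
    nlinarith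
  rcases hν with h | h <;> subst h
  · calc cubeUniform n S ≤ volume S := Measure.restrict_le_self S
      _ = ENNReal.ofReal ((2*δ)^n) := hvol
      _ ≤ _ := ENNReal.ofReal_le_ofReal h2δ
  · rw [boxUniform, Measure.smul_apply, smul_eq_mul]
    calc (ENNReal.ofReal ((2*β)^n))⁻¹ * (volume.restrict {y : Euc n | ∀ j, y j ∈ Set.Icc (-β) β}) S
        ≤ (ENNReal.ofReal ((2*β)^n))⁻¹ * volume S :=
          mul_le_mul_right (Measure.restrict_le_self S) _
      _ = ENNReal.ofReal (((2*β)^n)⁻¹) * ENNReal.ofReal ((2*δ)^n) := by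
          rw [hvol, ENNReal.ofReal_inv_of_pos (by positivity)]
      _ = ENNReal.ofReal (((2*β)^n)⁻¹ * (2*δ)^n) := by
          rw [ENNReal.ofReal_mul (by positivity)]
      _ ≤ _ := by
          apply ENNReal.ofReal_le_ofReal
          rw [← inv_pow, ← mul_pow]
          apply pow_le_pow_left₀ (by positivity)
          have h1 : (2*β)⁻¹ * (2*δ) = 2 * (2*β)⁻¹ * δ := by ring
          have h2 : (2*β)⁻¹ ≤ max 1 (2*β)⁻¹ := le_max_right _ _
          rw [h1]
          nlinarith
  
lemma rpow_finset_sum {ι : Type*} (s : Finset ι) {x : ℝ} (hx : 0 < x) (f : ι → ℝ) :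
    x ^ (∑ i ∈ s, f i) = ∏ i ∈ s, x ^ f i := by
  classical
  induction s using Finset.induction with
  | empty => simp
  | insert a s h ih => rw [Finset.sum_insert h, Finset.prod_insert h, Real.rpow_add hx, ih]

lemma sum_count_sym {k m : ℕ} (σ : Sym (Fin k) m) :
    ∑ i : Fin k, Multiset.count i σ.1 = m := by
  classical
  have h2 : ∑ i : Fin k, Multiset.count i σ.1 = ∑ a ∈ σ.1.toFinset, σ.1.count a := by
    symm
    apply Finset.sum_subset (Finset.subset_univ _)
    intro x _ hx
    exact Multiset.count_eq_zero.2 fun h => hx (Multiset.mem_toFinset.2 h)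
  rw [h2, Multiset.toFinset_sum_count_eq σ.1]
  exact σ.2

lemma card_fiber_ge {k r0 : ℕ} (hk : 1 ≤ k) (m : ℕ) (hm : m ≤ r0) :
    ((m + k - 1).choose (k - 1) : ℕ) ≤
      (Finset.univ.filter (fun s : SIdx k r0 => (∑ i, toMulti s i) = m)).card := by
  classical
  have hchoose : (m + k - 1).choose (k - 1) = Fintype.card (Sym (Fin k) m) := by
    rw [Sym.card_sym_eq_choose, Fintype.card_fin]
    have h1 : k + m - 1 = m + k - 1 := by omega
    have h2 : m + k - 1 - m = k - 1 := by omega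
    rw [h1, ← h2, Nat.choose_symm (by omega)]
  rw [hchoose, ← Fintype.card_subtype]
  have hφ : ∀ σ : Sym (Fin k) m, ∀ i : Fin k, Multiset.count i σ.1 < r0 + 1 := by
    intro σ i
    have h1 := Multiset.count_le_card i σ.1
    rw [σ.2] at h1
    omega
  let φ : Sym (Fin k) m → {s : SIdx k r0 // (∑ i, toMulti s i) = m} := fun σ =>
    ⟨⟨fun i => ⟨Multiset.count i σ.1, hφ σ i⟩, by
        simpa [toMulti] using (sum_count_sym σ).le.trans hm⟩, by
      simpa [toMulti] using sum_count_sym σ⟩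
  have hinj : Function.Injective φ := by
    intro σ1 σ2 h
    have hcount : ∀ i : Fin k, Multiset.count i σ1.1 = Multiset.count i σ2.1 := by
      intro i
      have := congrArg (fun t => ((t.1.1 i : Fin (r0+1)) : ℕ)) h
      simpa [φ] using this
    apply Subtype.ext
    exact Multiset.ext.2 fun a => hcount a
  exact Fintype.card_le_of_injective φ hinj

lemma wconst_le_sum {k r0 : ℕ} (hk : 1 ≤ k) {α : ℝ} (hα : 0 < α) (hr0α : (r0:ℝ) < α) :
    wconst k r0 α ≤ ∑ s : SIdx k r0, (1 - (∑ i, (toMulti s i : ℝ))/α) := by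
  classical
  have hcast : ∀ s : SIdx k r0, (∑ i, (toMulti s i : ℝ)) = ((∑ i, toMulti s i : ℕ) : ℝ) := by
    intro s; rw [Nat.cast_sum]
  have hmaps : ∀ s : SIdx k r0, s ∈ Finset.univ → (∑ i, toMulti s i) ∈ Finset.range (r0+1) := by
    intro s _
    rw [Finset.mem_range]
    have : (∑ i, toMulti s i) ≤ r0 := by simpa [toMulti] using s.2
    omega
  calc wconst k r0 α
      = ∑ m ∈ Finset.range (r0+1), (1 - (m:ℝ)/α) * ((m + k - 1).choose (k-1) : ℕ) := by
        rw [wconst]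
    _ ≤ ∑ m ∈ Finset.range (r0+1),
          ((Finset.univ.filter (fun s : SIdx k r0 => (∑ i, toMulti s i) = m)).card : ℝ) *
            (1 - (m:ℝ)/α) := by
        apply Finset.sum_le_sum
        intro m hm
        rw [Finset.mem_range] at hm
        have hm' : m ≤ r0 := by omega
        have hpos : 0 ≤ 1 - (m:ℝ)/α := by
          have : (m:ℝ) ≤ r0 := by exact_mod_cast hm'
          have : (m:ℝ)/α ≤ 1 := by
            rw [div_le_one hα]; linarith
          linarith
        rw [mul_comm]
        apply mul_le_mul_of_nonneg_right _ hpos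
        exact_mod_cast card_fiber_ge hk m hm'
    _ = ∑ m ∈ Finset.range (r0+1),
          ∑ s ∈ Finset.univ.filter (fun s : SIdx k r0 => (∑ i, toMulti s i) = m),
            (1 - ((∑ i, toMulti s i : ℕ) : ℝ)/α) := by
        apply Finset.sum_congr rfl
        intro m _
        rw [Finset.sum_congr rfl (fun s hs => by
          rw [(Finset.mem_filter.1 hs).2]), Finset.sum_const, nsmul_eq_mul]
    _ = ∑ s : SIdx k r0, (1 - ((∑ i, toMulti s i : ℕ) : ℝ)/α) :=
        Finset.sum_fiberwise_of_maps_to hmaps _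
    _ = _ := by
        apply Finset.sum_congr rfl
        intro s _
        rw [hcast]

lemma phiPt_bound {k n r0 : ℕ} (hn : 0 < n) {α ε : ℝ} (hα : 0 < α)
    (y1 y2 : SIdx k r0 → Euc n) (hε : 0 < ε)
    (h : PhiPt α y1 y2 ≤ ε) (s : SIdx k r0)
    (hs : (∑ i, (toMulti s i : ℝ)) < α) (j : Fin n) :
    |y1 s j - y2 s j| ≤ ε ^ (1 - (∑ i, (toMulti s i : ℝ))/α) := by
  set m := ∑ i, (toMulti s i : ℝ) with hm
  set a := supNorm (y1 s - y2 s) with ha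
  have ha0 : 0 ≤ a := supNorm_nonneg hn _
  have hαm : 0 < α - m := by linarith
  have hp : 0 < α / (α - m) := div_pos hα hαm
  have hterm : a ^ (α / (α - m)) ≤ ε := by
    refine le_trans ?_ h
    exact le_ciSup (f := fun s : SIdx k r0 =>
        supNorm (y1 s - y2 s) ^ (α / (α - ∑ i, (toMulti s i : ℝ))))
      (Set.Finite.bddAbove (Set.finite_range _)) s
  have key : a ≤ ε ^ (1 - m/α) := by
    have h1 := Real.rpow_le_rpow (Real.rpow_nonneg ha0 _) hterm (le_of_lt (inv_pos.2 hp))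
    rw [← Real.rpow_mul ha0, mul_inv_cancel₀ hp.ne', Real.rpow_one] at h1
    have h2 : (α / (α - m))⁻¹ = 1 - m/α := by
      rw [inv_div, one_sub_div hα.ne']
    rwa [h2] at h1
  have hj : |(y1 s - y2 s) j| ≤ a := abs_apply_le_supNorm _ j
  have hcoord : (y1 s - y2 s) j = y1 s j - y2 s j := rfl
  rw [← hcoord]
  exact hj.trans key

end Aux

/-- **Lemma 2 (measure of a `Φ`-neighborhood of a graph).** There is `c₂ > 0` such that for
all `f ∈ 𝓗` and all `ε > 0`, `μ(graph^𝐒(f)^{ε,Φ}) ≤ c₂ ε^{(d-k)w}`. -/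
theorem graphS_measure (k d : ℕ) (hk : 1 ≤ k) (hkd : k < d) (α β : ℝ)
    (hα : 1 < α) (hβ : 0 < β) (r0 : ℕ) (hr01 : 1 ≤ r0) (hr0 : r0 ≤ rr α) :
    ∃ c2 : ℝ, 0 < c2 ∧ ∀ f ∈ Holder k (d-k) α β, ∀ ε : ℝ, 0 < ε →
      obsMeasure k d r0 β
          {p | p.1 ∈ unitCube k ∧ PhiPt α p.2 (fun s => mderiv (toMulti s) f p.1) ≤ ε}
        ≤ ENNReal.ofReal (c2 * ε ^ (((d:ℝ)-k) * wconst k r0 α)) := by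
  classical
  have hn1 : 0 < d - k := by omega
  have hα0 : (0:ℝ) < α := by linarith
  have hr0α : (r0 : ℝ) < α :=
    lt_of_le_of_lt (by exact_mod_cast hr0 : (r0:ℝ) ≤ (rr α : ℝ)) (rr_lt_alpha hα)
  have hdk : ((d:ℝ) - k) = ((d - k : ℕ) : ℝ) := by
    rw [Nat.cast_sub hkd.le]
  have hdk0 : (0:ℝ) ≤ (d:ℝ) - k := by
    rw [hdk]; positivity
  set Cβ : ℝ := 2 * max 1 (2*β)⁻¹ with hCβdef
  have hCβ1 : (1:ℝ) ≤ Cβ := by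
    have h1 : (1:ℝ) ≤ max 1 (2*β)⁻¹ := le_max_left _ _
    nlinarith
  have hCβ0 : (0:ℝ) < Cβ := by linarith
  set N := Fintype.card (SIdx k r0) with hN
  have hwnn : 0 ≤ wconst k r0 α := by
    rw [wconst]
    apply Finset.sum_nonneg
    intro m hm
    rw [Finset.mem_range] at hm
    have hm' : (m:ℝ) ≤ r0 := by exact_mod_cast Nat.lt_succ_iff.1 hm
    have hm1 : (m:ℝ)/α ≤ 1 := by rw [div_le_one hα0]; linarith
    have : (0:ℝ) ≤ 1 - (m:ℝ)/α := by linarith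
    positivity
  refine ⟨Cβ ^ ((d-k) * N), pow_pos hCβ0 _, ?_⟩
  intro f hf ε hε
  haveI hIF : ∀ s : SIdx k r0, SigmaFinite
      (if (∀ i, s.1 i = 0) then cubeUniform (d-k) else boxUniform (d-k) β) := by
    intro s
    by_cases hs : ∀ i, s.1 i = 0
    · rw [if_pos hs]
      haveI := isFiniteMeasure_cubeUniform (d-k)
      infer_instance
    · rw [if_neg hs]
      haveI := isFiniteMeasure_boxUniform (n := d-k) β hβ
      infer_instance
  rcases le_or_gt ε 1 with hε1 | hε1
  swap
  · -- case `1 < ε`: the whole space has measure `1`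
    have hle : obsMeasure k d r0 β
        {p | p.1 ∈ unitCube k ∧ PhiPt α p.2 (fun s => mderiv (toMulti s) f p.1) ≤ ε} ≤ 1 := by
      calc obsMeasure k d r0 β _ ≤ obsMeasure k d r0 β Set.univ :=
            measure_mono (Set.subset_univ _)
        _ = 1 := by
          rw [obsMeasure, ← Set.univ_prod_univ, Measure.prod_prod, cubeUniform_univ,
            Measure.pi_univ, one_mul]
          apply Finset.prod_eq_one
          intro s _
          by_cases hs : ∀ i, s.1 i = 0
          · rw [if_pos hs, cubeUniform_univ]
          · rw [if_neg hs, boxUniform_univ β hβ]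
    refine hle.trans ?_
    rw [show (1:ENNReal) = ENNReal.ofReal 1 from ENNReal.ofReal_one.symm]
    apply ENNReal.ofReal_le_ofReal
    have h1 : (1:ℝ) ≤ Cβ ^ ((d-k)*N) := one_le_pow₀ hCβ1
    have h2 : (1:ℝ) ≤ ε ^ (((d:ℝ)-k) * wconst k r0 α) := by
      have := Real.rpow_le_rpow (by norm_num) hε1.le (mul_nonneg hdk0 hwnn)
      rwa [Real.one_rpow] at this
    nlinarith
  -- main case: `ε ≤ 1`
  obtain ⟨hmap, hdiff, hbound, hHold⟩ := hf
  have hfdiff : Differentiable ℝ f := by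
    have h0 : ([] : List (Fin k)).length < rr α := by
      simpa using Nat.lt_of_lt_of_le Nat.zero_lt_one (one_le_rr hα)
    exact hdiff [] h0
  have hfmeas : Measurable f := hfdiff.continuous.measurable
  set g : SIdx k r0 → Euc k → Euc (d-k) := fun s => mderiv (toMulti s) f with hg
  have hgmeas : ∀ s, Measurable (g s) := fun s => measurable_pdIter _ f hfmeas
  have hgjmeas : ∀ s j, Measurable (fun x => g s x j) := fun s j =>
    (measurable_pi_apply j).comp ((WithLp.measurable_ofLp 2 _).comp (hgmeas s))
  set δ : SIdx k r0 → ℝ := fun s => ε ^ (1 - (∑ i, (toMulti s i : ℝ))/α) with hδ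
  have hmsα : ∀ s : SIdx k r0, (∑ i, (toMulti s i : ℝ)) < α := by
    intro s
    have h1 : (∑ i, (toMulti s i : ℝ)) = ((∑ i, toMulti s i : ℕ) : ℝ) := by
      rw [Nat.cast_sum]
    have h2 : (∑ i, toMulti s i) ≤ r0 := by simpa [toMulti] using s.2
    rw [h1]
    calc ((∑ i, toMulti s i : ℕ) : ℝ) ≤ (r0:ℝ) := by exact_mod_cast h2
      _ < α := hr0α
  have hδpos : ∀ s, 0 < δ s := fun s => Real.rpow_pos_of_pos hε _
  -- the enlarged measurable set
  set A' : Set (Euc k × (SIdx k r0 → Euc (d-k))) :=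
    {p | p.1 ∈ unitCube k ∧ ∀ s : SIdx k r0, ∀ j, |p.2 s j - g s p.1 j| ≤ δ s} with hA'
  have hA'meas : MeasurableSet A' := by
    have h1 : MeasurableSet {p : Euc k × (SIdx k r0 → Euc (d-k)) | p.1 ∈ unitCube k} :=
      measurable_fst (measurableSet_unitCube k)
    have h2 : ∀ (s : SIdx k r0) (j : Fin (d-k)), MeasurableSet
        {p : Euc k × (SIdx k r0 → Euc (d-k)) | |p.2 s j - g s p.1 j| ≤ δ s} := by
      intro s j
      have hm : Measurable (fun p : Euc k × (SIdx k r0 → Euc (d-k)) =>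
          p.2 s j - g s p.1 j) :=
        ((measurable_pi_apply j).comp ((WithLp.measurable_ofLp 2 (Fin (d-k) → ℝ)).comp ((measurable_pi_apply s).comp measurable_snd))).sub
          ((hgjmeas s j).comp measurable_fst)
      have heq : {p : Euc k × (SIdx k r0 → Euc (d-k)) | |p.2 s j - g s p.1 j| ≤ δ s} =
          (fun p : Euc k × (SIdx k r0 → Euc (d-k)) => p.2 s j - g s p.1 j) ⁻¹'
            Set.Icc (-(δ s)) (δ s) := by
        ext p
        simp [abs_le]
      rw [heq]
      exact hm measurableSet_Icc
    have heq : A' = {p : Euc k × (SIdx k r0 → Euc (d-k)) | p.1 ∈ unitCube k} ∩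
        ⋂ s, ⋂ j, {p : Euc k × (SIdx k r0 → Euc (d-k)) | |p.2 s j - g s p.1 j| ≤ δ s} := by
      ext p
      simp [hA', Set.mem_iInter]
    rw [heq]
    exact h1.inter (MeasurableSet.iInter fun s => MeasurableSet.iInter fun j => h2 s j)
  -- the target set is contained in `A'`
  have hsub : {p : Euc k × (SIdx k r0 → Euc (d-k)) | p.1 ∈ unitCube k ∧
      PhiPt α p.2 (fun s => mderiv (toMulti s) f p.1) ≤ ε} ⊆ A' := by
    rintro p ⟨hp1, hp2⟩
    refine ⟨hp1, fun s j => ?_⟩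
    exact phiPt_bound hn1 hα0 p.2 (fun s => g s p.1) hε hp2 s (hmsα s) j
  -- bound on each slice of `A'`
  set M : ENNReal := ∏ s : SIdx k r0, ENNReal.ofReal ((Cβ * δ s)^(d-k)) with hM
  have hslice : ∀ x : Euc k, (Measure.pi fun s : SIdx k r0 =>
      if (∀ i, s.1 i = 0) then cubeUniform (d-k) else boxUniform (d-k) β)
        (Prod.mk x ⁻¹' A') ≤ M := by
    intro x
    by_cases hx : x ∈ unitCube k
    · have hEq : Prod.mk x ⁻¹' A' = Set.pi Set.univ
          (fun s : SIdx k r0 =>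
            {z : Euc (d-k) | ∀ j, z j ∈ Set.Icc (g s x j - δ s) (g s x j + δ s)}) := by
        ext y
        simp only [hA', Set.mem_preimage, Set.mem_setOf_eq, Set.mem_pi, Set.mem_univ,
          true_implies, Set.mem_Icc, hx, true_and]
        constructor
        · intro h s j
          have h' := h s j
          rw [abs_le] at h'
          constructor <;> linarith [h'.1, h'.2]
        · intro h s j
          rw [abs_le]
          have h' := h s j
          constructor <;> linarith [h'.1, h'.2]
      rw [hEq, Measure.pi_pi]
      apply Finset.prod_le_prod'
      intro s _
      apply factor_le hβ (hδpos s).le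
      by_cases hs : ∀ i, s.1 i = 0
      · left; rw [if_pos hs]
      · right; rw [if_neg hs]
    · have hEq : Prod.mk x ⁻¹' A' = ∅ := by
        ext y
        simp [hA', hx]
      rw [hEq]
      simp
  -- integrate the slice bound
  have hA'le : obsMeasure k d r0 β A' ≤ M := by
    rw [obsMeasure, Measure.prod_apply hA'meas]
    calc ∫⁻ x, (Measure.pi fun s : SIdx k r0 =>
          if (∀ i, s.1 i = 0) then cubeUniform (d-k) else boxUniform (d-k) β)
            (Prod.mk x ⁻¹' A') ∂(cubeUniform k)
        ≤ ∫⁻ _x, M ∂(cubeUniform k) := lintegral_mono hslice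
      _ = M * cubeUniform k Set.univ := lintegral_const M
      _ = M := by rw [cubeUniform_univ, mul_one]
  -- compute `M`
  set E : ℝ := ∑ s : SIdx k r0, (1 - (∑ i, (toMulti s i : ℝ))/α) with hE
  have hwE : wconst k r0 α ≤ E := wconst_le_sum hk hα0 hr0α
  have hMval : M = ENNReal.ofReal (Cβ ^ ((d-k)*N) * (ε ^ E) ^ (d-k)) := by
    rw [hM, ← ENNReal.ofReal_prod_of_nonneg (fun s _ => by positivity)]
    congr 1
    rw [Finset.prod_pow, Finset.prod_mul_distrib, Finset.prod_const, Finset.card_univ, ← hN]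
    have hδprod : (∏ s : SIdx k r0, δ s) = ε ^ E := by
      simp only [hδ, hE]
      exact (rpow_finset_sum _ hε _).symm
    rw [hδprod, mul_pow, ← pow_mul, Nat.mul_comm N (d-k)]
  calc obsMeasure k d r0 β {p | p.1 ∈ unitCube k ∧ PhiPt α p.2 (fun s => mderiv (toMulti s) f p.1) ≤ ε} ≤ obsMeasure k d r0 β A' := measure_mono hsub
    _ ≤ M := hA'le
    _ ≤ ENNReal.ofReal (Cβ ^ ((d-k)*N) * ε ^ (((d:ℝ)-k) * wconst k r0 α)) := by
        rw [hMval]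
        apply ENNReal.ofReal_le_ofReal
        apply mul_le_mul_of_nonneg_left _ (by positivity)
        have h1 : (ε ^ E) ^ (d-k) = ε ^ (E * ((d-k:ℕ):ℝ)) := by
          rw [← Real.rpow_natCast (ε ^ E) (d-k), ← Real.rpow_mul hε.le]
        rw [h1]
        apply Real.rpow_le_rpow_of_exponent_ge hε hε1
        rw [hdk]
        calc ((d-k:ℕ):ℝ) * wconst k r0 α ≤ ((d-k:ℕ):ℝ) * E :=
              mul_le_mul_of_nonneg_left hwE (by positivity)
          _ = E * ((d-k:ℕ):ℝ) := mul_comm _ _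
end
end

section
/- There is a constant c = c(k,d) > 0 such that for all sufficiently small ε > 0, ν([0,ε]^{(d−k)k}) > c ε^{(d−k)k}, where ν is the probability measure on ℝ^{(d−k)k} induced from an O(d)-invariant probability measure λ on G(k,d) by the map κ. -/
open MeasureTheory Filter Set
open scoped RealInnerProductSpace

noncomputable section

section XiLB

variable {k d : ℕ}

/-- Inclusion of the first `k` coordinates. -/
def idx1 (h : k ≤ d) (s : Fin k) : Fin d :=
  Fin.cast (Nat.add_sub_cancel' h) (Fin.castAdd (d-k) s)

/-- Inclusion of the last `d-k` coordinates. -/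
def idx2 (h : k ≤ d) (j : Fin (d-k)) : Fin d :=
  Fin.cast (Nat.add_sub_cancel' h) (Fin.natAdd k j)

lemma pairFun_idx1 (h : k ≤ d) (x : Euc k) (y : Euc (d-k)) (s : Fin k) :
    pairFun h x y (idx1 h s) = x s := by
  simp [pairFun, idx1, Fin.append_left]

lemma pairFun_idx2 (h : k ≤ d) (x : Euc k) (y : Euc (d-k)) (j : Fin (d-k)) :
    pairFun h x y (idx2 h j) = y j := by
  simp [pairFun, idx2, Fin.append_right]

/-- Projection onto the first `k` coordinates. -/
def proj1 (h : k ≤ d) (v : Euc d) : Euc k := WithLp.toLp 2 (fun s => v (idx1 h s))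

/-- Projection onto the last `d-k` coordinates. -/
def proj2 (h : k ≤ d) (v : Euc d) : Euc (d-k) := WithLp.toLp 2 (fun j => v (idx2 h j))

lemma pairFun_proj (h : k ≤ d) (v : Euc d) : pairFun h (proj1 h v) (proj2 h v) = v := by
  ext i
  have : v i = Fin.append (proj1 h v) (proj2 h v) (Fin.cast (Nat.add_sub_cancel' h).symm i) := by
    generalize hj : (Fin.cast (Nat.add_sub_cancel' h).symm i) = j
    have hi : i = Fin.cast (Nat.add_sub_cancel' h) j := by subst hj; simp
    subst hi
    induction j using Fin.addCases with
    | left s => rw [Fin.append_left]; rfl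
    | right j => rw [Fin.append_right]; rfl
  exact this.symm


lemma euc_sum_single {n : ℕ} (a : Euc n) :
    ∑ i, EuclideanSpace.single i (a i) = a := by
  ext j
  rw [WithLp.ofLp_sum, Finset.sum_apply j Finset.univ _]
  simp [EuclideanSpace.single_apply]

lemma euc_abs_le_norm {n : ℕ} (a : Euc n) (i : Fin n) : |a i| ≤ ‖a‖ := by
  rw [EuclideanSpace.norm_eq]
  have h1 : |a i| = Real.sqrt (‖a i‖^2) := by
    rw [Real.sqrt_sq_eq_abs]; simp
  rw [h1]
  apply Real.sqrt_le_sqrt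
  exact Finset.single_le_sum (fun j _ => sq_nonneg ‖a j‖) (Finset.mem_univ i)

lemma euc_norm_le_sum_abs {n : ℕ} (a : Euc n) : ‖a‖ ≤ ∑ i, |a i| := by
  calc ‖a‖ = ‖∑ i, EuclideanSpace.single i (a i)‖ := by rw [euc_sum_single]
  _ ≤ ∑ i, ‖EuclideanSpace.single i (a i)‖ := norm_sum_le _ _
  _ = ∑ i, |a i| := by simp [EuclideanSpace.norm_single]

lemma euc_norm_sq_split (h : k ≤ d) (v : Euc d) :
    ‖v‖^2 = ‖proj1 h v‖^2 + ‖proj2 h v‖^2 := by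
  have key : ∀ {n : ℕ} (w : Euc n), ‖w‖^2 = ∑ i, (w i)^2 := by
    intro n w
    rw [EuclideanSpace.norm_eq, Real.sq_sqrt (by positivity)]
    simp [sq_abs]
  rw [key v, key (proj1 h v), key (proj2 h v)]
  have e : d = k + (d - k) := (Nat.add_sub_cancel' h).symm
  rw [← Fintype.sum_equiv (finCongr e.symm) (fun j => v (finCongr e.symm j) ^ 2)
    (fun i => v i ^ 2) (fun j => rfl)]
  rw [Fin.sum_univ_add]
  rfl

lemma euc_norm_proj1_le (h : k ≤ d) (v : Euc d) : ‖proj1 h v‖ ≤ ‖v‖ := by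
  have := euc_norm_sq_split h v
  nlinarith [norm_nonneg v, norm_nonneg (proj1 h v), sq_nonneg ‖proj2 h v‖]

lemma euc_norm_pair0 (h : k ≤ d) (y : Euc (d-k)) : ‖pairFun h 0 y‖ = ‖y‖ := by
  have h2 := euc_norm_sq_split h (pairFun h 0 y)
  have e1 : proj1 h (pairFun h 0 y) = 0 := by
    ext s; exact pairFun_idx1 h 0 y s
  have e2 : proj2 h (pairFun h 0 y) = y := by
    ext j; exact pairFun_idx2 h 0 y j
  rw [e1, e2] at h2
  simp at h2
  nlinarith [norm_nonneg (pairFun h 0 y), norm_nonneg y]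

lemma proj1_sum (h : k ≤ d) {m : Type*} (t : Finset m) (f : m → Euc d) :
    proj1 h (∑ r ∈ t, f r) = ∑ r ∈ t, proj1 h (f r) := by
  ext s
  rw [WithLp.ofLp_sum, Finset.sum_apply s t _]
  show (∑ r ∈ t, f r) (idx1 h s) = _
  rw [WithLp.ofLp_sum]
  exact Finset.sum_apply (idx1 h s) t _

lemma proj2_sum (h : k ≤ d) {m : Type*} (t : Finset m) (f : m → Euc d) :
    proj2 h (∑ r ∈ t, f r) = ∑ r ∈ t, proj2 h (f r) := by
  ext s
  rw [WithLp.ofLp_sum, Finset.sum_apply s t _]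
  show (∑ r ∈ t, f r) (idx2 h s) = _
  rw [WithLp.ofLp_sum]
  exact Finset.sum_apply (idx2 h s) t _

lemma proj1_smul (h : k ≤ d) (r : ℝ) (v : Euc d) : proj1 h (r • v) = r • proj1 h v := rfl
lemma proj2_smul (h : k ≤ d) (r : ℝ) (v : Euc d) : proj2 h (r • v) = r • proj2 h v := rfl
lemma proj1_add (h : k ≤ d) (v w : Euc d) : proj1 h (v + w) = proj1 h v + proj1 h w := rfl
lemma proj2_add (h : k ≤ d) (v w : Euc d) : proj2 h (v + w) = proj2 h v + proj2 h w := rfl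


/-- The graph subspace `span {(e_s, Y^s)}`. -/
def graphY (h : k ≤ d) (Y : Fin k → Euc (d-k)) : Submodule ℝ (Euc d) :=
  Submodule.span ℝ (Set.range fun s : Fin k => pairFun h (EuclideanSpace.single s 1) (Y s))

/-- The parameterization of the graph. -/
def liftY (h : k ≤ d) (Y : Fin k → Euc (d-k)) (x : Euc k) : Euc d :=
  ∑ r, x r • pairFun h (EuclideanSpace.single r 1) (Y r)

lemma proj1_liftY (h : k ≤ d) (Y : Fin k → Euc (d-k)) (x : Euc k) :
    proj1 h (liftY h Y x) = x := by
  ext s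
  unfold liftY
  rw [proj1_sum]
  rw [WithLp.ofLp_sum, Finset.sum_apply s Finset.univ _]
  have : ∀ r, (proj1 h (x r • pairFun h (EuclideanSpace.single r 1) (Y r))) s
      = x r * (EuclideanSpace.single r (1:ℝ)) s := by
    intro r
    rw [proj1_smul]
    have : proj1 h (pairFun h (EuclideanSpace.single r 1) (Y r)) s
        = (EuclideanSpace.single r (1:ℝ)) s := pairFun_idx1 h _ _ s
    simp [this]
  rw [Finset.sum_congr rfl (fun r _ => this r)]
  simp [EuclideanSpace.single_apply]

lemma proj2_liftY (h : k ≤ d) (Y : Fin k → Euc (d-k)) (x : Euc k) :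
    proj2 h (liftY h Y x) = ∑ r, x r • Y r := by
  unfold liftY
  rw [proj2_sum]
  congr 1
  funext r
  rw [proj2_smul]
  congr 1
  ext j
  exact pairFun_idx2 h _ _ j

lemma liftY_mem (h : k ≤ d) (Y : Fin k → Euc (d-k)) (x : Euc k) :
    liftY h Y x ∈ graphY h Y := by
  apply Submodule.sum_mem
  intro r _
  exact Submodule.smul_mem _ _ (Submodule.subset_span (Set.mem_range_self r))

lemma mem_graphY (h : k ≤ d) (Y : Fin k → Euc (d-k)) (v : Euc d) (hv : v ∈ graphY h Y) :
    v = liftY h Y (proj1 h v) := by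
  obtain ⟨c, hc⟩ := (Submodule.mem_span_range_iff_exists_fun ℝ).1 hv
  have hlift : liftY h Y (WithLp.toLp 2 c) = v := hc
  rw [← hlift, proj1_liftY]

lemma liftY_single (h : k ≤ d) (Y : Fin k → Euc (d-k)) (s : Fin k) :
    liftY h Y (EuclideanSpace.single s 1) = pairFun h (EuclideanSpace.single s 1) (Y s) := by
  unfold liftY
  rw [Finset.sum_eq_single s]
  · simp [EuclideanSpace.single_apply]
  · intro r _ hr
    have h0 : (EuclideanSpace.single s (1:ℝ)) r = 0 := by
      simp [EuclideanSpace.single_apply, hr]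
    rw [h0, zero_smul]
  · intro hs; exact absurd (Finset.mem_univ s) hs

lemma graphY_inj (h : k ≤ d) (Y Y' : Fin k → Euc (d-k)) (heq : graphY h Y = graphY h Y') :
    Y = Y' := by
  funext s
  have hmem : pairFun h (EuclideanSpace.single s 1) (Y s) ∈ graphY h Y' := by
    rw [← heq]; exact Submodule.subset_span (Set.mem_range_self s)
  have h1 := mem_graphY h Y' _ hmem
  have h2 : proj1 h (pairFun h (EuclideanSpace.single s 1) (Y s)) = EuclideanSpace.single s 1 := by
    ext t; exact pairFun_idx1 h _ _ t
  rw [h2, liftY_single] at h1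
  have := congrArg (proj2 h) h1
  have e1 : proj2 h (pairFun h (EuclideanSpace.single s 1) (Y s)) = Y s := by
    ext j; exact pairFun_idx2 h _ _ j
  have e2 : proj2 h (pairFun h (EuclideanSpace.single s 1) (Y' s)) = Y' s := by
    ext j; exact pairFun_idx2 h _ _ j
  rw [e1, e2] at this
  exact this

lemma finrank_graphY (h : k ≤ d) (Y : Fin k → Euc (d-k)) :
    Module.finrank ℝ (graphY h Y) = k := by
  have hli : LinearIndependent ℝ (fun s : Fin k => pairFun h (EuclideanSpace.single s 1) (Y s)) := by
    rw [Fintype.linearIndependent_iff]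
    intro g hg s
    have : liftY h Y (WithLp.toLp 2 g) = 0 := hg
    have := congrArg (proj1 h) this
    rw [proj1_liftY] at this
    exact congrArg (fun v : Euc k => v s) this
  rw [graphY, finrank_span_eq_card hli, Fintype.card_fin]

/-- Any two graphs are related by a linear isometry of the ambient space. -/
lemma exists_iso (h : k ≤ d) (Y c : Fin k → Euc (d-k)) :
    ∃ σ : Euc d ≃ₗᵢ[ℝ] Euc d,
      Submodule.map (σ.toLinearEquiv : Euc d →ₗ[ℝ] Euc d) (graphY h Y) = graphY h c := by
  have hrank : Module.finrank ℝ (graphY h Y) = Module.finrank ℝ (graphY h c) := by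
    rw [finrank_graphY, finrank_graphY]
  let e0 : graphY h Y ≃ₗᵢ[ℝ] graphY h c :=
    (stdOrthonormalBasis ℝ (graphY h Y)).repr.trans
      ((LinearIsometryEquiv.piLpCongrLeft 2 ℝ ℝ (finCongr hrank)).trans
        (stdOrthonormalBasis ℝ (graphY h c)).repr.symm)
  let L : graphY h Y →ₗᵢ[ℝ] Euc d := (graphY h c).subtypeₗᵢ.comp e0.toLinearIsometry
  let F : Euc d →ₗᵢ[ℝ] Euc d := L.extend
  let σ : Euc d ≃ₗᵢ[ℝ] Euc d := F.toLinearIsometryEquiv rfl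
  refine ⟨σ, ?_⟩
  have hle : Submodule.map (σ.toLinearEquiv : Euc d →ₗ[ℝ] Euc d) (graphY h Y) ≤ graphY h c := by
    rintro _ ⟨w, hw, rfl⟩
    have h1 : σ w = F w := rfl
    have h2 : F w = L ⟨w, hw⟩ := L.extend_apply ⟨w, hw⟩
    show σ.toLinearEquiv w ∈ graphY h c
    have : σ.toLinearEquiv w = L ⟨w, hw⟩ := h2
    rw [this]
    exact (e0 ⟨w, hw⟩).2
  refine Submodule.eq_of_le_of_finrank_eq hle ?_
  rw [LinearEquiv.finrank_map_eq, finrank_graphY, finrank_graphY]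


lemma euc_sum_smul_single {n : ℕ} (a : Euc n) :
    ∑ i, a i • EuclideanSpace.single i (1:ℝ) = a := by
  have : ∀ i : Fin n, a i • EuclideanSpace.single i (1:ℝ) = EuclideanSpace.single i (a i) := by
    intro i; ext j
    have h1 : (a i • EuclideanSpace.single i (1:ℝ)) j = a i * (EuclideanSpace.single i (1:ℝ)) j := rfl
    rw [h1]
    simp [EuclideanSpace.single_apply, mul_ite]
  rw [Finset.sum_congr rfl (fun i _ => this i)]
  exact euc_sum_single a

lemma norm_sum_smul_le {n : ℕ} {V : Type*} [NormedAddCommGroup V] [NormedSpace ℝ V]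
    (z : Euc n) (w : Fin n → V) (b : ℝ) (hb : ∀ r, ‖w r‖ ≤ b) :
    ‖∑ r, z r • w r‖ ≤ n * ‖z‖ * b := by
  calc ‖∑ r, z r • w r‖ ≤ ∑ r, ‖z r • w r‖ := norm_sum_le _ _
  _ ≤ ∑ _r : Fin n, ‖z‖ * b := by
      apply Finset.sum_le_sum
      intro r _
      rw [norm_smul]
      have h1 : ‖z r‖ ≤ ‖z‖ := by
        have := euc_abs_le_norm z r
        simpa using this
      have h2 : (0:ℝ) ≤ ‖w r‖ := norm_nonneg _
      have h3 := hb r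
      have h4 : (0:ℝ) ≤ ‖z r‖ := norm_nonneg _
      nlinarith [norm_nonneg z]
  _ = n * ‖z‖ * b := by rw [Finset.sum_const, Finset.card_univ, Fintype.card_fin]; ring

/-- `liftY` as a linear map. -/
def liftYL (h : k ≤ d) (Y : Fin k → Euc (d-k)) : Euc k →ₗ[ℝ] Euc d where
  toFun := liftY h Y
  map_add' x x' := by
    unfold liftY
    rw [← Finset.sum_add_distrib]
    congr 1; funext r
    have : (x + x') r = x r + x' r := rfl
    rw [this, add_smul]
  map_smul' a x := by
    unfold liftY
    simp only [RingHom.id_apply]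
    rw [Finset.smul_sum]
    congr 1; funext r
    have : (a • x) r = a * x r := rfl
    rw [this, smul_smul]

/-- `proj1` as a linear map. -/
def proj1L (h : k ≤ d) : Euc d →ₗ[ℝ] Euc k where
  toFun := proj1 h
  map_add' _ _ := rfl
  map_smul' _ _ := rfl

set_option maxHeartbeats 2000000 in
/-- The key quantitative lemma: an isometry carrying `graph y₀` to `graph c`
(where `c` has all entries `ε/2`) carries the graph of any `Y` in a small box around `y₀`
to a graph with coordinates in `[0, ε]`. -/
lemma geo_main (h : k ≤ d) (hdk1 : 1 ≤ d - k) (hk1 : 1 ≤ k)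
    (σ : Euc d ≃ₗᵢ[ℝ] Euc d) (y₀ c Y : Fin k → Euc (d-k))
    (ε : ℝ) (hε : 0 < ε) (hεs : ((k:ℝ) * ((d - k : ℕ) : ℝ) + 1) * ε ≤ 1)
    (hσ : Submodule.map (σ.toLinearEquiv : Euc d →ₗ[ℝ] Euc d) (graphY h y₀) = graphY h c)
    (hc : ∀ t j, c t j = ε/2)
    (hY : ∀ s j, |Y s j - y₀ s j| ≤ ε / (24 * ((k:ℝ) * ((d - k : ℕ) : ℝ)))) :
    ∃ Y', Submodule.map (σ.toLinearEquiv : Euc d →ₗ[ℝ] Euc d) (graphY h Y) = graphY h Y'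
      ∧ ∀ s j, Y' s j ∈ Set.Icc (0:ℝ) ε := by
  classical
  set B : ℝ := (k:ℝ) * ((d - k : ℕ) : ℝ) with hB
  have hkB : (k:ℝ) ≤ B := by
    rw [hB]
    have h2 : (1:ℝ) ≤ ((d - k : ℕ):ℝ) := by exact_mod_cast hdk1
    nlinarith [Nat.cast_nonneg (α := ℝ) k]
  have hB1 : (1:ℝ) ≤ B := by
    rw [hB]
    have h1 : (1:ℝ) ≤ (k:ℝ) := by exact_mod_cast hk1
    have h2 : (1:ℝ) ≤ ((d - k : ℕ):ℝ) := by exact_mod_cast hdk1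
    nlinarith
  have hεB : B * ε ≤ 1 := by nlinarith [hε]
  have hε1 : ε ≤ 1/2 := by nlinarith [hε]
  have hkε : (k:ℝ) * ε ≤ 1 := by nlinarith [hε]
  set δ : ℝ := ε / (24 * B) with hδ
  have hδ0 : 0 < δ := by
    apply div_pos hε; nlinarith
  have hBδ : B * δ = ε / 24 := by
    rw [hδ]; field_simp
  have hYδ : ∀ s j, |Y s j - y₀ s j| ≤ δ := by
    intro s j
    have := hY s j
    rw [hδ, hB]
    exact this
  -- the perturbation vectors
  set w : Fin k → Euc d := fun r => σ (pairFun h 0 (Y r - y₀ r)) with hw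
  have hwnorm : ∀ r, ‖w r‖ ≤ ((d - k : ℕ):ℝ) * δ := by
    intro r
    rw [hw]
    simp only
    rw [σ.norm_map, euc_norm_pair0]
    calc ‖Y r - y₀ r‖ ≤ ∑ j, |(Y r - y₀ r) j| := euc_norm_le_sum_abs _
    _ ≤ ∑ _j : Fin (d - k), δ := by
        apply Finset.sum_le_sum
        intro j _
        have hrj : (Y r - y₀ r) j = Y r j - y₀ r j := rfl
        rw [hrj]
        exact hYδ r j
    _ = ((d - k : ℕ):ℝ) * δ := by rw [Finset.sum_const, Finset.card_univ, Fintype.card_fin]; simp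
  -- decomposition of σ ∘ lift
  have hdecomp : ∀ x : Euc k, σ (liftY h Y x) = σ (liftY h y₀ x) + ∑ r, x r • w r := by
    intro x
    have hsplit : liftY h Y x = liftY h y₀ x + ∑ r, x r • pairFun h 0 (Y r - y₀ r) := by
      unfold liftY
      rw [← Finset.sum_add_distrib]
      congr 1; funext r
      rw [← smul_add]
      congr 1
      ext i
      rw [show (pairFun h (EuclideanSpace.single r 1) (y₀ r) + pairFun h 0 (Y r - y₀ r)) i
        = pairFun h (EuclideanSpace.single r 1) (y₀ r) i + pairFun h 0 (Y r - y₀ r) i from rfl]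
      unfold pairFun
      simp only [WithLp.ofLp_toLp]
      generalize (Fin.cast (Nat.add_sub_cancel' h).symm i) = j
      induction j using Fin.addCases with
      | left s => rw [Fin.append_left, Fin.append_left, Fin.append_left]; simp
      | right jj =>
          rw [Fin.append_right, Fin.append_right, Fin.append_right]
          have hjj : (Y r - y₀ r) jj = Y r jj - y₀ r jj := rfl
          rw [hjj]; ring
    rw [hsplit, map_add]
    congr 1
    rw [map_sum]
    congr 1; funext r
    exact σ.map_smul _ _
  -- the map T
  set TL : Euc k →ₗ[ℝ] Euc k :=
    (proj1L h).comp ((σ.toLinearEquiv : Euc d →ₗ[ℝ] Euc d).comp (liftYL h Y)) with hTL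
  have hTLapp : ∀ x, TL x = proj1 h (σ (liftY h Y x)) := fun x => rfl
  have hT0mem : ∀ x : Euc k, σ (liftY h y₀ x) ∈ graphY h c := by
    intro x
    rw [← hσ]
    exact Submodule.mem_map_of_mem (liftY_mem h y₀ x)
  -- norm bound for T₀
  have hcnorm : ∀ t, ‖c t‖ ≤ ((d - k : ℕ):ℝ) * (ε/2) := by
    intro t
    calc ‖c t‖ ≤ ∑ j, |c t j| := euc_norm_le_sum_abs _
    _ = ∑ _j : Fin (d - k), ε/2 := by
        apply Finset.sum_congr rfl
        intro j _
        rw [hc t j, abs_of_nonneg (by linarith)]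
    _ = ((d - k : ℕ):ℝ) * (ε/2) := by rw [Finset.sum_const, Finset.card_univ, Fintype.card_fin]; simp
  have hT0 : ∀ x : Euc k, ‖x‖ ≤ 2 * ‖proj1 h (σ (liftY h y₀ x))‖ := by
    intro x
    obtain ⟨v, hv⟩ : ∃ v, v = σ (liftY h y₀ x) := ⟨_, rfl⟩
    rw [← hv]
    have hvm : v ∈ graphY h c := hv ▸ hT0mem x
    have hveq := mem_graphY h c _ hvm
    have hproj2 : proj2 h v = ∑ t, (proj1 h v) t • c t := by
      conv_lhs => rw [hveq]
      rw [proj2_liftY]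
    have h2le : ‖proj2 h v‖ ≤ (k:ℝ) * ‖proj1 h v‖ * (((d - k : ℕ):ℝ) * (ε/2)) := by
      rw [hproj2]
      exact norm_sum_smul_le _ _ _ hcnorm
    have h2le' : ‖proj2 h v‖ ≤ ‖proj1 h v‖ := by
      have hf : (k:ℝ) * (((d - k : ℕ):ℝ) * (ε/2)) ≤ 1 := by
        rw [hB] at hεB
        nlinarith
      have hp1 : (0:ℝ) ≤ ‖proj1 h v‖ := norm_nonneg _
      nlinarith
    have hxv : ‖x‖ ≤ ‖v‖ := by
      rw [hv, σ.norm_map]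
      calc ‖x‖ = ‖proj1 h (liftY h y₀ x)‖ := by rw [proj1_liftY]
      _ ≤ ‖liftY h y₀ x‖ := euc_norm_proj1_le h _
    have hsq := euc_norm_sq_split h v
    have h4 : ‖v‖^2 ≤ (2 * ‖proj1 h v‖)^2 := by
      nlinarith [norm_nonneg (proj2 h v), norm_nonneg (proj1 h v)]
    have hfin : ‖v‖ ≤ 2 * ‖proj1 h v‖ := by
      have h5 : ‖v‖ = Real.sqrt (‖v‖^2) := (Real.sqrt_sq (norm_nonneg v)).symm
      rw [h5]
      calc Real.sqrt (‖v‖^2) ≤ Real.sqrt ((2 * ‖proj1 h v‖)^2) := Real.sqrt_le_sqrt h4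
      _ = 2 * ‖proj1 h v‖ := Real.sqrt_sq (by positivity)
    linarith
  -- perturbation bound
  have hΔT : ∀ x : Euc k, ‖TL x - proj1 h (σ (liftY h y₀ x))‖ ≤ B * δ * ‖x‖ := by
    intro x
    rw [hTLapp, hdecomp x]
    rw [show proj1 h (σ (liftY h y₀ x) + ∑ r, x r • w r)
        = proj1 h (σ (liftY h y₀ x)) + proj1 h (∑ r, x r • w r) from proj1_add h _ _]
    rw [add_sub_cancel_left]
    calc ‖proj1 h (∑ r, x r • w r)‖ ≤ ‖∑ r, x r • w r‖ := euc_norm_proj1_le h _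
    _ ≤ (k:ℝ) * ‖x‖ * (((d - k : ℕ):ℝ) * δ) := norm_sum_smul_le _ _ _ hwnorm
    _ = B * δ * ‖x‖ := by rw [hB]; ring
  -- lower bound for T
  have hT : ∀ x : Euc k, ‖x‖ ≤ 4 * ‖TL x‖ := by
    intro x
    have h1 := hT0 x
    have h2 := hΔT x
    have h3 : ‖proj1 h (σ (liftY h y₀ x))‖ ≤ ‖TL x‖ + B * δ * ‖x‖ := by
      have habs := abs_norm_sub_norm_le (proj1 h (σ (liftY h y₀ x))) (TL x)
      have h5 := abs_le.1 habs
      have h6 : ‖proj1 h (σ (liftY h y₀ x)) - TL x‖ = ‖TL x - proj1 h (σ (liftY h y₀ x))‖ :=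
        norm_sub_rev _ _
      rw [h6] at h5
      linarith [h5.1]
    have hBδ4 : B * δ ≤ 1/4 := by rw [hBδ]; linarith
    nlinarith [norm_nonneg x, norm_nonneg (TL x)]
  -- T is bijective
  have hTinj : Function.Injective TL := by
    intro a b hab
    have h0 : TL (a - b) = 0 := by rw [map_sub, hab, sub_self]
    have h1 : ‖a - b‖ ≤ 4 * ‖TL (a-b)‖ := hT _
    rw [h0, norm_zero] at h1
    have h2 : ‖a - b‖ = 0 := le_antisymm (by linarith) (norm_nonneg _)
    exact sub_eq_zero.1 (norm_eq_zero.1 h2)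
  have hTsurj : Function.Surjective TL := (LinearMap.injective_iff_surjective).1 hTinj
  -- the inverse images of the basis vectors
  choose z hz using fun s : Fin k => hTsurj (EuclideanSpace.single s 1)
  have hznorm : ∀ s, ‖z s‖ ≤ 4 := by
    intro s
    have h1 := hT (z s)
    rw [hz s, EuclideanSpace.norm_single] at h1
    simpa using h1
  -- the new graph coordinates
  set Y' : Fin k → Euc (d - k) := fun s => proj2 h (σ (liftY h Y (z s))) with hY'
  refine ⟨Y', ?_, ?_⟩
  · -- span equality
    apply le_antisymm
    · -- σ(graph Y) ≤ graph Y'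
      rw [Submodule.map_le_iff_le_comap]
      rw [graphY, Submodule.span_le]
      rintro _ ⟨s, rfl⟩
      simp only [SetLike.mem_coe, Submodule.mem_comap]
      have hgen : (σ.toLinearEquiv : Euc d →ₗ[ℝ] Euc d) (pairFun h (EuclideanSpace.single s 1) (Y s))
          = σ (liftY h Y (∑ t, (TL (EuclideanSpace.single s 1)) t • z t)) := by
        have hx : (EuclideanSpace.single s (1:ℝ)) = ∑ t, (TL (EuclideanSpace.single s 1)) t • z t := by
          apply hTinj
          rw [map_sum]
          have h7 : ∀ t, TL ((TL (EuclideanSpace.single s 1)) t • z t)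
              = (TL (EuclideanSpace.single s 1)) t • EuclideanSpace.single t 1 := by
            intro t; rw [TL.map_smul, hz t]
          rw [Finset.sum_congr rfl (fun t _ => h7 t)]
          rw [euc_sum_smul_single]
        rw [← liftY_single h Y s, ← hx]
        rfl
      rw [hgen]
      have h8 : liftY h Y (∑ t, (TL (EuclideanSpace.single s 1)) t • z t)
          = ∑ t, (TL (EuclideanSpace.single s 1)) t • liftY h Y (z t) := by
        have h9 := map_sum (liftYL h Y) (fun t => (TL (EuclideanSpace.single s 1)) t • z t) Finset.univ
        rw [show liftY h Y (∑ t, (TL (EuclideanSpace.single s 1)) t • z t)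
          = liftYL h Y (∑ t, (TL (EuclideanSpace.single s 1)) t • z t) from rfl, h9]
        congr 1; funext t
        exact map_smul (liftYL h Y) _ _
      rw [h8, map_sum]
      apply Submodule.sum_mem
      intro t _
      rw [σ.map_smul]
      apply Submodule.smul_mem
      have hgt : σ (liftY h Y (z t))
          = pairFun h (EuclideanSpace.single t 1) (Y' t) := by
        have h1 : proj1 h (σ (liftY h Y (z t))) = EuclideanSpace.single t 1 := hz t
        have h2 : proj2 h (σ (liftY h Y (z t))) = Y' t := rfl
        have h3 := pairFun_proj h (σ (liftY h Y (z t)))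
        rw [h1, h2] at h3
        exact h3.symm
      rw [hgt]
      exact Submodule.subset_span (Set.mem_range_self t)
    · -- graph Y' ≤ σ(graph Y)
      rw [graphY, Submodule.span_le]
      rintro _ ⟨s, rfl⟩
      simp only [SetLike.mem_coe]
      have hgt : pairFun h (EuclideanSpace.single s 1) (Y' s)
          = (σ.toLinearEquiv : Euc d →ₗ[ℝ] Euc d) (liftY h Y (z s)) := by
        have h1 : proj1 h (σ (liftY h Y (z s))) = EuclideanSpace.single s 1 := hz s
        have h2 : proj2 h (σ (liftY h Y (z s))) = Y' s := rfl
        have h3 := pairFun_proj h (σ (liftY h Y (z s)))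
        rw [h1, h2] at h3
        exact h3
      rw [hgt]
      exact Submodule.mem_map_of_mem (liftY_mem h Y (z s))
  · -- the entry bounds
    intro s j
    have hdec := hdecomp (z s)
    have hY'eq : Y' s = proj2 h (σ (liftY h y₀ (z s))) + proj2 h (∑ r, (z s) r • w r) := by
      rw [hY']
      simp only
      rw [hdec]
      exact proj2_add h _ _
    have hvm : σ (liftY h y₀ (z s)) ∈ graphY h c := hT0mem (z s)
    have hveq := mem_graphY h c _ hvm
    have hproj2 : proj2 h (σ (liftY h y₀ (z s)))
        = ∑ t, (proj1 h (σ (liftY h y₀ (z s)))) t • c t := by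
      conv_lhs => rw [hveq]
      rw [proj2_liftY]
    -- proj1 v is close to single s 1
    have hη : ‖TL (z s) - proj1 h (σ (liftY h y₀ (z s)))‖ ≤ B * δ * ‖z s‖ := hΔT (z s)
    rw [hz s] at hη
    have hη4 : ‖EuclideanSpace.single s 1 - proj1 h (σ (liftY h y₀ (z s)))‖ ≤ ε/6 := by
      have h1 := hznorm s
      have hBδpos : 0 ≤ B * δ := by positivity
      calc ‖EuclideanSpace.single s 1 - proj1 h (σ (liftY h y₀ (z s)))‖
          ≤ B * δ * ‖z s‖ := hη
      _ ≤ B * δ * 4 := by nlinarith [norm_nonneg (z s)]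
      _ = ε/6 := by rw [hBδ]; ring
    -- second piece
    have hρ : ‖proj2 h (∑ r, (z s) r • w r)‖ ≤ ε/6 := by
      calc ‖proj2 h (∑ r, (z s) r • w r)‖ ≤ ‖∑ r, (z s) r • w r‖ := by
            have hsq := euc_norm_sq_split h (∑ r, (z s) r • w r)
            nlinarith [norm_nonneg (∑ r, (z s) r • w r),
              norm_nonneg (proj2 h (∑ r, (z s) r • w r)),
              sq_nonneg ‖proj1 h (∑ r, (z s) r • w r)‖]
      _ ≤ (k:ℝ) * ‖z s‖ * (((d - k : ℕ):ℝ) * δ) := norm_sum_smul_le _ _ _ hwnorm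
      _ ≤ 4 * (B * δ) := by
          have h1 := hznorm s
          rw [hB]
          nlinarith [mul_nonneg (sub_nonneg.2 (hznorm s))
            (show (0:ℝ) ≤ (k:ℝ)*(((d-k):ℕ):ℝ)*δ by positivity), norm_nonneg (z s)]
      _ ≤ ε/6 := by rw [hBδ]; linarith
    -- entry computation
    have hentry : Y' s j = (∑ t, (proj1 h (σ (liftY h y₀ (z s)))) t * (ε/2))
        + (proj2 h (∑ r, (z s) r • w r)) j := by
      rw [hY'eq]
      rw [show (proj2 h (σ (liftY h y₀ (z s))) + proj2 h (∑ r, (z s) r • w r)) j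
          = proj2 h (σ (liftY h y₀ (z s))) j + (proj2 h (∑ r, (z s) r • w r)) j from rfl]
      rw [hproj2]
      congr 1
      rw [WithLp.ofLp_sum, Finset.sum_apply j Finset.univ _]
      apply Finset.sum_congr rfl
      intro t _
      rw [show ((proj1 h (σ (liftY h y₀ (z s)))) t • c t) j
          = (proj1 h (σ (liftY h y₀ (z s)))) t * c t j from rfl, hc t j]
    have hsum : |(∑ t, (proj1 h (σ (liftY h y₀ (z s)))) t * (ε/2)) - ε/2| ≤ ε/12 := by
      have hss : (∑ t, (EuclideanSpace.single s (1:ℝ)) t * (ε/2)) = ε/2 := by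
        rw [Finset.sum_eq_single s]
        · simp [EuclideanSpace.single_apply]
        · intro t _ ht
          simp [EuclideanSpace.single_apply, ht]
        · intro hs; exact absurd (Finset.mem_univ s) hs
      have hdiff : (∑ t, (proj1 h (σ (liftY h y₀ (z s)))) t * (ε/2)) - ε/2
          = ∑ t, ((proj1 h (σ (liftY h y₀ (z s)))) t - (EuclideanSpace.single s (1:ℝ)) t) * (ε/2) := by
        rw [← hss, ← Finset.sum_sub_distrib]
        congr 1; funext t; ring
      rw [hdiff]
      calc |∑ t, ((proj1 h (σ (liftY h y₀ (z s)))) t - (EuclideanSpace.single s (1:ℝ)) t) * (ε/2)|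
          ≤ ∑ t, |((proj1 h (σ (liftY h y₀ (z s)))) t - (EuclideanSpace.single s (1:ℝ)) t) * (ε/2)| :=
            Finset.abs_sum_le_sum_abs _ _
      _ ≤ ∑ _t : Fin k, (ε/6) * (ε/2) := by
          apply Finset.sum_le_sum
          intro t _
          rw [abs_mul]
          have h1 : |(proj1 h (σ (liftY h y₀ (z s)))) t - (EuclideanSpace.single s (1:ℝ)) t| ≤ ε/6 := by
            have h2 : (proj1 h (σ (liftY h y₀ (z s)))) t - (EuclideanSpace.single s (1:ℝ)) t
                = (proj1 h (σ (liftY h y₀ (z s))) - EuclideanSpace.single s 1 : Euc k) t := rfl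
            rw [h2]
            calc |(proj1 h (σ (liftY h y₀ (z s))) - EuclideanSpace.single s 1 : Euc k) t|
                ≤ ‖proj1 h (σ (liftY h y₀ (z s))) - EuclideanSpace.single s 1‖ :=
                  euc_abs_le_norm _ t
            _ = ‖EuclideanSpace.single s 1 - proj1 h (σ (liftY h y₀ (z s)))‖ := norm_sub_rev _ _
            _ ≤ ε/6 := hη4
          have h3 : |ε/2| = ε/2 := abs_of_nonneg (by linarith)
          rw [h3]
          nlinarith [abs_nonneg ((proj1 h (σ (liftY h y₀ (z s)))) t - (EuclideanSpace.single s (1:ℝ)) t)]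
      _ = (k:ℝ) * ((ε/6) * (ε/2)) := by rw [Finset.sum_const, Finset.card_univ, Fintype.card_fin]; simp
      _ ≤ ε/12 := by nlinarith
    have hρj : |(proj2 h (∑ r, (z s) r • w r)) j| ≤ ε/6 :=
      le_trans (euc_abs_le_norm _ j) hρ
    have habs := abs_le.1 hsum
    have habs2 := abs_le.1 hρj
    rw [hentry]
    constructor
    · linarith [habs.1, habs2.1]
    · linarith [habs.2, habs2.2]

end XiLB

set_option maxHeartbeats 4000000 in
/-- **Lemma 9.** There is `c = c(k,d) > 0` such that for all small enough `ε > 0`,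
`ν([0,ε]^{(d-k)k}) > c ε^{(d-k)k}`, where `ν` is the pushforward of the invariant measure `λ`
on `G(k,d)` under the coordinate map `κ`. -/
theorem xi_lb (k d : ℕ) (hk : 1 ≤ k) (hkd : k < d)
    (lam : Measure (Grass k d)) (hprob : IsProbabilityMeasure lam) (hinv : IsOrthInvariant lam)
    (κ : Grass k d → (Fin k → Euc (d-k))) (hκmeas : Measurable κ)
    (hκ : ∀ᵐ W ∂lam, W.1 = Submodule.span ℝ
      (Set.range fun s : Fin k => pairFun hkd.le (EuclideanSpace.single s 1) (κ W s))) :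
    ∃ c : ℝ, 0 < c ∧ ∃ ε0 : ℝ, 0 < ε0 ∧ ∀ ε : ℝ, 0 < ε → ε < ε0 →
      ENNReal.ofReal (c * ε ^ (((d:ℝ)-k) * k)) <
        Measure.map κ lam {y | ∀ s j, y s j ∈ Set.Icc (0:ℝ) ε} := by
  classical
  have h : k ≤ d := hkd.le
  have hdk1 : 1 ≤ d - k := by omega
  set B : ℝ := (k:ℝ) * ((d - k : ℕ) : ℝ) with hB
  have hk0 : (0:ℝ) < (k:ℝ) := by exact_mod_cast hk
  have hdk0 : (0:ℝ) < ((d - k : ℕ):ℝ) := by exact_mod_cast hdk1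
  have hB1 : (1:ℝ) ≤ B := by
    rw [hB]
    have h1 : (1:ℝ) ≤ (k:ℝ) := by exact_mod_cast hk
    have h2 : (1:ℝ) ≤ ((d - k : ℕ):ℝ) := by exact_mod_cast hdk1
    nlinarith
  have hBpos : 0 < B := by linarith
  -- measurability of boxes
  have hev : ∀ (s : Fin k) (j : Fin (d-k)), Measurable (fun y : Fin k → Euc (d-k) => y s j) :=
    fun s j => (EuclideanSpace.proj j).continuous.measurable.comp (measurable_pi_apply s)
  have hboxm : ∀ (S : Fin k → Fin (d-k) → Set ℝ), (∀ s j, MeasurableSet (S s j)) →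
      MeasurableSet {y : Fin k → Euc (d-k) | ∀ s j, y s j ∈ S s j} := by
    intro S hS
    have hrw : {y : Fin k → Euc (d-k) | ∀ s j, y s j ∈ S s j}
        = ⋂ s, ⋂ j, (fun y : Fin k → Euc (d-k) => y s j) ⁻¹' (S s j) := by
      ext y; simp [Set.mem_iInter, Set.mem_preimage]
    rw [hrw]
    exact MeasurableSet.iInter fun s => MeasurableSet.iInter fun j => (hev s j) (hS s j)
  -- the good set and its null complement
  set Gset : Set (Grass k d) := {W | W.1 = graphY h (κ W)} with hGset
  have hGnull : lam Gsetᶜ = 0 := by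
    have hae : ∀ᵐ W ∂lam, W ∈ Gset := by
      filter_upwards [hκ] with W hW
      exact hW
    exact hae
  set N0 : Set (Grass k d) := MeasureTheory.toMeasurable lam Gsetᶜ with hN0
  have hN0meas : MeasurableSet N0 := measurableSet_toMeasurable lam _
  have hN0null : lam N0 = 0 := by
    rw [hN0, measure_toMeasurable]; exact hGnull
  have hN0sub : Gsetᶜ ⊆ N0 := subset_toMeasurable _ _
  -- big cubes exhaust the space
  haveI hν : IsProbabilityMeasure (Measure.map κ lam) :=
    Measure.isProbabilityMeasure_map hκmeas.aemeasurable
  set bigc : ℕ → Set (Fin k → Euc (d-k)) :=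
    fun q => {y | ∀ s j, y s j ∈ Set.Icc (-(q:ℝ)) (q:ℝ)} with hbigc
  have hbigmeas : ∀ q, MeasurableSet (bigc q) := fun q => hboxm _ (fun s j => measurableSet_Icc)
  have hmono : Monotone bigc := by
    intro a b hab y hy s j
    have h1 := hy s j
    have h2 : ((a:ℕ):ℝ) ≤ ((b:ℕ):ℝ) := by exact_mod_cast hab
    exact ⟨by linarith [h1.1], by linarith [h1.2]⟩
  have huniv : ⋃ q, bigc q = Set.univ := by
    ext y
    simp only [Set.mem_iUnion, Set.mem_univ, iff_true]
    obtain ⟨q, hq⟩ := exists_nat_ge (∑ s, ∑ j, |y s j|)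
    refine ⟨q, fun s j => ?_⟩
    have h1 : |y s j| ≤ ∑ s, ∑ j, |y s j| := by
      calc |y s j| ≤ ∑ j', |y s j'| :=
            Finset.single_le_sum (f := fun j' => |y s j'|) (fun j' _ => abs_nonneg _)
              (Finset.mem_univ j)
      _ ≤ ∑ s', ∑ j', |y s' j'| :=
            Finset.single_le_sum (f := fun s' => ∑ j', |y s' j'|)
              (fun s' _ => Finset.sum_nonneg fun j' _ => abs_nonneg _) (Finset.mem_univ s)
    have h2 := abs_le.1 (le_trans h1 hq)
    exact ⟨by linarith [h2.1], by linarith [h2.2]⟩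
  have htend := MeasureTheory.tendsto_measure_iUnion_atTop (μ := Measure.map κ lam) hmono
  rw [huniv, measure_univ] at htend
  have hev2 : ∀ᶠ q : ℕ in Filter.atTop, (1/2 : ENNReal) < Measure.map κ lam (bigc q) :=
    htend.eventually_const_lt (by norm_num)
  obtain ⟨M, hM⟩ := hev2.exists
  -- the constants
  set A : ℝ := 48 * B * ((M:ℝ) + 1) with hA
  have hApos : 0 < A := by positivity
  set Nn : ℕ := (d - k) * k with hNn
  refine ⟨1 / (4 * A ^ Nn), by positivity, 1/(B+1), by positivity, ?_⟩
  intro ε hε hεlt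
  have hεs : (B + 1) * ε ≤ 1 := by
    have h1 := (lt_div_iff₀ (by linarith : (0:ℝ) < B+1)).1 hεlt
    nlinarith
  have hε1 : ε ≤ 1 := by nlinarith
  set δ : ℝ := ε / (24 * B) with hδ
  have hδ0 : 0 < δ := by positivity
  have hδε : δ ≤ ε := by
    rw [hδ]
    rw [div_le_iff₀ (by positivity)]
    nlinarith
  set np : ℕ := ⌈2*(M:ℝ)/δ⌉₊ with hnp
  set grid : (Fin k → Fin (d-k) → Fin (np+1)) → (Fin k → Euc (d-k)) :=
    fun mm => fun s => WithLp.toLp 2 (fun j => -(M:ℝ) + δ * ((mm s j : ℕ) : ℝ)) with hgrid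
  set cmat : Fin k → Euc (d-k) := fun _ => WithLp.toLp 2 (fun _ => ε/2) with hcmat
  set cube : Set (Fin k → Euc (d-k)) := {y | ∀ s j, y s j ∈ Set.Icc (0:ℝ) ε} with hcube
  have hcubemeas : MeasurableSet cube := hboxm _ (fun s j => measurableSet_Icc)
  set box : (Fin k → Fin (d-k) → Fin (np+1)) → Set (Fin k → Euc (d-k)) :=
    fun mm => {y | ∀ s j, y s j ∈ Set.Icc (grid mm s j - δ) (grid mm s j + δ)} with hboxdef
  have hboxmeas' : ∀ mm, MeasurableSet (box mm) := fun mm => hboxm _ (fun s j => measurableSet_Icc)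
  -- covering
  have hcover : bigc M ⊆ ⋃ mm, box mm := by
    intro y hy
    simp only [Set.mem_iUnion]
    have hchoice : ∀ (s : Fin k) (j : Fin (d-k)),
        ∃ t : Fin (np+1), |y s j - (-(M:ℝ) + δ * ((t:ℕ):ℝ))| ≤ δ := by
      intro s j
      have hyb := hy s j
      set t0 : ℕ := ⌊(y s j + (M:ℝ))/δ⌋₊ with ht0
      have htnn : 0 ≤ (y s j + (M:ℝ)) := by linarith [hyb.1]
      have ht1 : (t0:ℝ) ≤ (y s j + (M:ℝ))/δ := Nat.floor_le (by positivity)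
      have ht2 : (y s j + (M:ℝ))/δ < (t0:ℝ) + 1 := Nat.lt_floor_add_one _
      have htle : t0 ≤ np := by
        have hle : (y s j + (M:ℝ))/δ ≤ 2*(M:ℝ)/δ :=
          (div_le_div_iff_of_pos_right hδ0).2 (by linarith [hyb.2])
        calc t0 ≤ ⌊2*(M:ℝ)/δ⌋₊ := Nat.floor_le_floor hle
        _ ≤ ⌈2*(M:ℝ)/δ⌉₊ := Nat.floor_le_ceil _
        _ = np := hnp.symm
      refine ⟨⟨t0, Nat.lt_succ_of_le htle⟩, ?_⟩
      have hm1 : (t0:ℝ)*δ ≤ y s j + (M:ℝ) := by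
        rw [← le_div_iff₀ hδ0]; exact ht1
      have hm2 : y s j + (M:ℝ) < ((t0:ℝ) + 1)*δ := by
        rw [← div_lt_iff₀ hδ0]; exact ht2
      rw [abs_le]
      constructor <;> [nlinarith; nlinarith]
    choose mm hmm using hchoice
    refine ⟨mm, ?_⟩
    show ∀ s j, y s j ∈ Set.Icc (grid mm s j - δ) (grid mm s j + δ)
    intro s j
    have h1 := abs_le.1 (hmm s j)
    have h2 : grid mm s j = -(M:ℝ) + δ * ((mm s j : ℕ):ℝ) := by rw [hgrid]
    rw [Set.mem_Icc, h2]
    exact ⟨by linarith [h1.1], by linarith [h1.2]⟩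
  -- each box has measure at most that of the cube
  have hone : ∀ mm, Measure.map κ lam (box mm) ≤ Measure.map κ lam cube := by
    intro mm
    obtain ⟨σ, hσ⟩ := exists_iso h (grid mm) cmat
    have hincl : κ ⁻¹' (box mm) ⊆ (rotGrass σ ⁻¹' (κ ⁻¹' cube)) ∪ (N0 ∪ rotGrass σ ⁻¹' N0) := by
      intro W hW
      by_cases hW1 : W ∈ Gset
      swap
      · exact Or.inr (Or.inl (hN0sub hW1))
      by_cases hW2 : rotGrass σ W ∈ Gset
      swap
      · exact Or.inr (Or.inr (hN0sub hW2))
      left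
      have hδval : δ = ε / (24 * ((k:ℝ) * ((d - k : ℕ) : ℝ))) := by rw [hδ, hB]
      have hYbox : ∀ s j, |κ W s j - grid mm s j| ≤ ε / (24 * ((k:ℝ) * ((d - k : ℕ) : ℝ))) := by
        intro s j
        have h1 := hW s j
        rw [abs_le, ← hδval]
        exact ⟨by linarith [h1.1], by linarith [h1.2]⟩
      obtain ⟨Y', hspan, hY'⟩ := geo_main h hdk1 hk σ (grid mm) cmat (κ W) ε hε hεs hσ
        (fun t j => rfl) hYbox
      show κ (rotGrass σ W) ∈ cube
      have hrot : (rotGrass σ W).1 = graphY h Y' := by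
        show Submodule.map (σ.toLinearEquiv : Euc d →ₗ[ℝ] Euc d) W.1 = graphY h Y'
        rw [show W.1 = graphY h (κ W) from hW1]
        exact hspan
      have hrot2 : (rotGrass σ W).1 = graphY h (κ (rotGrass σ W)) := hW2
      have hkey : κ (rotGrass σ W) = Y' := graphY_inj h _ _ (by rw [← hrot2]; exact hrot)
      intro s j
      rw [hkey]
      exact hY' s j
    calc Measure.map κ lam (box mm) = lam (κ ⁻¹' (box mm)) :=
          Measure.map_apply hκmeas (hboxmeas' mm)
    _ ≤ lam ((rotGrass σ ⁻¹' (κ ⁻¹' cube)) ∪ (N0 ∪ rotGrass σ ⁻¹' N0)) := measure_mono hincl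
    _ ≤ lam (rotGrass σ ⁻¹' (κ ⁻¹' cube)) + lam (N0 ∪ rotGrass σ ⁻¹' N0) := measure_union_le _ _
    _ ≤ lam (rotGrass σ ⁻¹' (κ ⁻¹' cube)) + (lam N0 + lam (rotGrass σ ⁻¹' N0)) :=
          add_le_add_right (measure_union_le _ _) _
    _ = lam (rotGrass σ ⁻¹' (κ ⁻¹' cube)) := by
          rw [hinv σ N0 hN0meas, hN0null]
          simp
    _ = lam (κ ⁻¹' cube) := hinv σ _ (hκmeas hcubemeas)
    _ = Measure.map κ lam cube := (Measure.map_apply hκmeas hcubemeas).symm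
  -- summing over the covering
  set C : ℕ := Fintype.card (Fin k → Fin (d-k) → Fin (np+1)) with hC
  have hsum : (1/2 : ENNReal) < (C : ENNReal) * Measure.map κ lam cube := by
    calc (1/2 : ENNReal) < Measure.map κ lam (bigc M) := hM
    _ ≤ Measure.map κ lam (⋃ mm, box mm) := measure_mono hcover
    _ ≤ ∑ mm, Measure.map κ lam (box mm) := measure_iUnion_fintype_le _ _
    _ ≤ ∑ _mm : (Fin k → Fin (d-k) → Fin (np+1)), Measure.map κ lam cube :=
          Finset.sum_le_sum (fun mm _ => hone mm)
    _ = (C : ENNReal) * Measure.map κ lam cube := by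
          rw [Finset.sum_const, Finset.card_univ, nsmul_eq_mul, hC]
  have hC1 : 1 ≤ C := Fintype.card_pos
  have hCne : (C : ENNReal) ≠ 0 := by
    simp only [ne_eq, Nat.cast_eq_zero]
    omega
  have hCnetop : (C : ENNReal) ≠ ⊤ := ENNReal.natCast_ne_top C
  -- lower bound for the cube measure
  have hlow : (((2*C : ℕ) : ENNReal))⁻¹ < Measure.map κ lam cube := by
    by_contra hcon
    push_neg at hcon
    have h1 : (C : ENNReal) * Measure.map κ lam cube ≤ (C : ENNReal) * ((2*C : ℕ) : ENNReal)⁻¹ :=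
      mul_le_mul_right hcon _
    have h2 : (C : ENNReal) * ((2*C : ℕ) : ENNReal)⁻¹ = 1/2 := by
      push_cast
      rw [ENNReal.mul_inv (Or.inl (by norm_num)) (Or.inl (by norm_num))]
      rw [← mul_assoc, mul_comm (C : ENNReal) (2:ENNReal)⁻¹, mul_assoc,
        ENNReal.mul_inv_cancel hCne hCnetop]
      simp [one_div]
    rw [h2] at h1
    exact absurd hsum (not_lt.2 h1)
  -- real-number bound on the cardinality
  have hcard : (C:ℝ) = ((np+1 : ℕ):ℝ) ^ Nn := by
    rw [hC, hNn]
    have h1 : Fintype.card (Fin k → Fin (d-k) → Fin (np+1)) = ((np+1) ^ (d-k)) ^ k := by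
      rw [Fintype.card_fun, Fintype.card_fun, Fintype.card_fin, Fintype.card_fin, Fintype.card_fin]
    rw [h1, ← pow_mul]
    push_cast
    ring
  have hnple : ((np+1 : ℕ):ℝ) ≤ A / ε := by
    have h1 : (np:ℝ) < 2*(M:ℝ)/δ + 1 := by
      rw [hnp]
      exact Nat.ceil_lt_add_one (by positivity)
    have h2 : 2*(M:ℝ)/δ = 48*B*(M:ℝ)/ε := by
      rw [hδ]; field_simp; ring
    have h3 : (2:ℝ) ≤ 48*B/ε := by
      rw [le_div_iff₀ hε]
      nlinarith
    have h4 : ((np+1 : ℕ):ℝ) = (np:ℝ) + 1 := by push_cast; ring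
    rw [h4, hA]
    have h5 : 48*B*((M:ℝ)+1)/ε = 48*B*(M:ℝ)/ε + 48*B/ε := by field_simp
    have h6 : (np:ℝ) < 48*B*(M:ℝ)/ε + 1 := by rw [← h2]; exact h1
    rw [h5]
    linarith
  have hCle : (C:ℝ) ≤ (A/ε) ^ Nn := by
    rw [hcard]
    exact pow_le_pow_left₀ (by positivity) hnple Nn
  -- final arithmetic
  have hexp : ε ^ (((d:ℝ)-k) * k) = ε ^ Nn := by
    have h1 : ((d:ℝ) - (k:ℝ)) = ((d - k : ℕ):ℝ) := by
      rw [Nat.cast_sub h]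
    rw [h1, ← Nat.cast_mul, Real.rpow_natCast, hNn]
  have hreal : 1 / (4 * A ^ Nn) * ε ^ Nn ≤ 1 / (2*(C:ℝ)) := by
    have hC0 : (0:ℝ) < (C:ℝ) := by
      have h9 : (1:ℝ) ≤ (C:ℝ) := by exact_mod_cast hC1
      linarith
    have hεN : (0:ℝ) < ε ^ Nn := by positivity
    have hAN : (0:ℝ) < A ^ Nn := by positivity
    have hCle' : (C:ℝ) ≤ A^Nn / ε^Nn := by rw [← div_pow]; exact hCle
    have hCε : (C:ℝ) * ε^Nn ≤ A^Nn := (le_div_iff₀ hεN).1 hCle'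
    rw [show 1 / (4 * A ^ Nn) * ε ^ Nn = ε^Nn / (4*A^Nn) by ring]
    rw [div_le_div_iff₀ (by positivity) (by positivity)]
    nlinarith
  have hofreal : ENNReal.ofReal (1 / (4 * A ^ Nn) * ε ^ (((d:ℝ)-k) * k))
      ≤ (((2*C : ℕ) : ENNReal))⁻¹ := by
    rw [hexp]
    have h1 : (((2*C : ℕ) : ENNReal))⁻¹ = ENNReal.ofReal (1/(2*(C:ℝ))) := by
      have hpos : (0:ℝ) < 2*(C:ℝ) := by
        have h9 : (1:ℝ) ≤ (C:ℝ) := by exact_mod_cast hC1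
        linarith
      rw [one_div, ENNReal.ofReal_inv_of_pos hpos]
      congr 1
      rw [show ((2:ℝ)*(C:ℝ)) = ((2*C : ℕ):ℝ) by push_cast; ring, ENNReal.ofReal_natCast]
    rw [h1]
    exact ENNReal.ofReal_le_ofReal hreal
  exact lt_of_le_of_lt hofreal hlow

end
end

section
/- There is a constant c = c(k,d) > 0 such that for every orthonormal set of vectors u_1,…,u_k in ℝ^d there exists a permutation σ of {1,…,d} such that |⟨u_i, e_{σ(i)}⟩| ≥ c for all i = 1,…,k. -/
open MeasureTheory Filter Set
open scoped RealInnerProductSpace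

noncomputable section

lemma perm_bases_aux_exists_inj {k d : ℕ} (u : Fin k → Euc d) (hu : Orthonormal ℝ u) :
    ∃ f : Fin k → Fin d, Function.Injective f ∧ ∀ i, u i (f i) ≠ 0 := by
  classical
  set t : Fin k → Finset (Fin d) := fun i => Finset.univ.filter (fun j => u i j ≠ 0) with ht
  have hall : ∀ s : Finset (Fin k), s.card ≤ (s.biUnion t).card := by
    intro s
    set T := s.biUnion t with hT
    set g : {j // j ∈ T} → Euc d := fun j => EuclideanSpace.single (j : Fin d) (1:ℝ) with hg
    have hsingle : LinearIndependent ℝ g := by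
      have h2 := (EuclideanSpace.basisFun (Fin d) ℝ).toBasis.linearIndependent.comp
        (fun j : {j // j ∈ T} => (j : Fin d)) Subtype.coe_injective
      simpa [hg, Function.comp_def, EuclideanSpace.basisFun_apply,
        OrthonormalBasis.coe_toBasis] using h2
    set V := Submodule.span ℝ (Set.range g) with hV
    have hVrank : Module.finrank ℝ V = T.card := by
      rw [hV, finrank_span_eq_card hsingle, Fintype.card_coe]
    have hmem : ∀ i ∈ s, u i ∈ V := by
      intro i hi
      have hrepr : u i = ∑ j ∈ T, (u i j) • (EuclideanSpace.single j (1:ℝ) : Euc d) := by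
        ext j'
        have h0 : (∑ x ∈ T, u i x • (EuclideanSpace.single x (1:ℝ) : Euc d)) j'
            = (EuclideanSpace.proj j' : Euc d →L[ℝ] ℝ)
              (∑ x ∈ T, u i x • (EuclideanSpace.single x (1:ℝ) : Euc d)) := rfl
        rw [h0, map_sum]
        by_cases hj' : j' ∈ T
        · simp [EuclideanSpace.single_apply, hj']
        · have hz : u i j' = 0 := by
            by_contra hne
            exact hj' (Finset.mem_biUnion.2 ⟨i, hi, by simp [ht, hne]⟩)
          simp [EuclideanSpace.single_apply, hj', hz]
      rw [hrepr]
      refine Submodule.sum_mem _ (fun j hj => Submodule.smul_mem _ _ ?_)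
      exact Submodule.subset_span ⟨⟨j, hj⟩, rfl⟩
    have hli : LinearIndependent ℝ (fun i : {i // i ∈ s} => (⟨u i, hmem i i.2⟩ : V)) := by
      apply LinearIndependent.of_comp V.subtype
      exact hu.linearIndependent.comp (fun i : {i // i ∈ s} => (i : Fin k)) Subtype.coe_injective
    have hle := hli.fintype_card_le_finrank
    simpa [Fintype.card_coe, hVrank] using hle
  obtain ⟨f, hfinj, hf⟩ := (Finset.all_card_le_biUnion_card_iff_exists_injective t).mp hall
  refine ⟨f, hfinj, fun i => ?_⟩
  have h := hf i
  simp only [ht, Finset.mem_filter] at h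
  exact h.2

lemma perm_bases_aux_perm_ext {k d : ℕ} (hkd : k ≤ d) (f : Fin k → Fin d)
    (hf : Function.Injective f) :
    ∃ σ : Equiv.Perm (Fin d), ∀ i, σ (Fin.castLE hkd i) = f i := by
  classical
  let e : {x // x ∈ Set.range (Fin.castLE hkd)} ≃ {x // x ∈ Set.range f} :=
    (Equiv.ofInjective _ (Fin.castLE_injective hkd)).symm.trans (Equiv.ofInjective f hf)
  refine ⟨e.extendSubtype, fun i => ?_⟩
  rw [e.extendSubtype_apply_of_mem _ ⟨i, rfl⟩]
  show ((Equiv.ofInjective f hf) ((Equiv.ofInjective _ (Fin.castLE_injective hkd)).symm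
      ⟨Fin.castLE hkd i, ⟨i, rfl⟩⟩) : Fin d) = f i
  rw [Equiv.ofInjective_symm_apply]
  simp

/-- **Lemma 14.** There is `c = c(k,d) > 0` such that for every orthonormal family
`u₁,…,u_k` in `ℝ^d` there is a permutation `σ` of `{1,…,d}` with
`|⟨u_i, e_{σ(i)}⟩| ≥ c` for all `i`. -/
theorem perm_bases (k d : ℕ) (hk : 1 ≤ k) (hkd : k ≤ d) :
    ∃ c : ℝ, 0 < c ∧ ∀ u : Fin k → Euc d, Orthonormal ℝ u →
      ∃ σ : Equiv.Perm (Fin d), ∀ i : Fin k,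
        c ≤ |⟪u i, EuclideanSpace.single (σ (Fin.castLE hkd i)) 1⟫| := by
  classical
  have hEx : ∀ u : Fin k → Euc d, Orthonormal ℝ u →
      ∃ σ : Equiv.Perm (Fin d), ∀ i, u i (σ (Fin.castLE hkd i)) ≠ 0 := by
    intro u hu
    obtain ⟨f, hfinj, hf⟩ := perm_bases_aux_exists_inj u hu
    obtain ⟨σ, hσ⟩ := perm_bases_aux_perm_ext hkd f hfinj
    exact ⟨σ, fun i => by rw [hσ i]; exact hf i⟩
  haveI : Nonempty (Fin k) := ⟨⟨0, hk⟩⟩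
  haveI : Nonempty (Fin d) := ⟨⟨0, lt_of_lt_of_le hk hkd⟩⟩
  have hPne : (Finset.univ : Finset (Equiv.Perm (Fin d))).Nonempty := Finset.univ_nonempty
  have hKne : (Finset.univ : Finset (Fin k)).Nonempty := Finset.univ_nonempty
  set F : (Fin k → Euc d) → ℝ := fun u =>
    Finset.univ.sup' hPne (fun σ : Equiv.Perm (Fin d) =>
      Finset.univ.inf' hKne (fun i : Fin k => |u i (σ (Fin.castLE hkd i))|)) with hF
  have hFcont : Continuous F := by
    apply Continuous.finset_sup'_apply hPne
    intro σ _
    apply Continuous.finset_inf'_apply hKne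
    intro i _
    exact ((EuclideanSpace.proj (σ (Fin.castLE hkd i))).continuous.comp
      (continuous_apply i)).abs
  set S : Set (Fin k → Euc d) := {u | Orthonormal ℝ u} with hS
  have hSclosed : IsClosed S := by
    have : S = ⋂ (i : Fin k) (j : Fin k),
        {u : Fin k → Euc d | ⟪u i, u j⟫ = if i = j then (1:ℝ) else 0} := by
      ext u
      simp only [hS, Set.mem_setOf_eq, Set.mem_iInter, orthonormal_iff_ite]
    rw [this]
    refine isClosed_iInter fun i => isClosed_iInter fun j => ?_
    exact isClosed_eq (Continuous.inner (continuous_apply i) (continuous_apply j))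
      continuous_const
  have hSbdd : Bornology.IsBounded S := by
    apply Bornology.IsBounded.subset
      (Metric.isBounded_closedBall (x := (0 : Fin k → Euc d)) (r := 1))
    intro u hu
    rw [Metric.mem_closedBall, dist_zero_right]
    refine (pi_norm_le_iff_of_nonneg zero_le_one).2 fun i => ?_
    rw [hu.1 i]
  have hScompact : IsCompact S := Metric.isCompact_of_isClosed_isBounded hSclosed hSbdd
  have hSne : S.Nonempty := by
    refine ⟨fun i => EuclideanSpace.single (Fin.castLE hkd i) 1, ?_⟩
    have h := (EuclideanSpace.basisFun (Fin d) ℝ).orthonormal.comp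
      (Fin.castLE hkd) (Fin.castLE_injective hkd)
    simpa [hS, Function.comp_def, EuclideanSpace.basisFun_apply] using h
  obtain ⟨u₀, hu₀S, hmin⟩ := hScompact.exists_isMinOn hSne hFcont.continuousOn
  refine ⟨F u₀, ?_, ?_⟩
  · obtain ⟨σ, hσ⟩ := hEx u₀ hu₀S
    have h1 : (0:ℝ) < Finset.univ.inf' hKne
        (fun i : Fin k => |u₀ i (σ (Fin.castLE hkd i))|) := by
      rw [Finset.lt_inf'_iff]
      exact fun i _ => abs_pos.2 (hσ i)
    exact h1.trans_le (Finset.le_sup'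
      (fun σ : Equiv.Perm (Fin d) =>
        Finset.univ.inf' hKne fun i : Fin k => |u₀ i (σ (Fin.castLE hkd i))|)
      (Finset.mem_univ σ))
  · intro u hu
    have hcu : F u₀ ≤ F u := hmin hu
    obtain ⟨σ, _, hσ⟩ := Finset.exists_mem_eq_sup' hPne
      (fun σ : Equiv.Perm (Fin d) =>
        Finset.univ.inf' hKne (fun i : Fin k => |u i (σ (Fin.castLE hkd i))|))
    refine ⟨σ, fun i => ?_⟩
    have h2 : F u ≤ |u i (σ (Fin.castLE hkd i))| := by
      rw [hF]
      simp only []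
      rw [hσ]
      exact Finset.inf'_le _ (Finset.mem_univ i)
    have h3 : ⟪u i, (EuclideanSpace.single (σ (Fin.castLE hkd i)) 1 : Euc d)⟫
        = u i (σ (Fin.castLE hkd i)) := by
      simp [EuclideanSpace.inner_single_right]
    rw [h3]
    exact hcu.trans h2
end
end

section
/- There is a constant c = c(k,d) > 0 such that for any orthonormal set of vectors u_1,…,u_k in ℝ^d there exists a permutation σ of {1,…,d} and vectors v_1,…,v_k, with v_i ∈ span{e_{σ(j)}: j = k+1,…,d} and ‖v_i‖_∞ ≤ c for all i, such that span{u_1,…,u_k} = span{e_{σ(1)}+v_1, …, e_{σ(k)}+v_k}. -/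
open MeasureTheory Filter Set
open scoped RealInnerProductSpace

noncomputable section

open Matrix

/-- Evaluation of a finite sum in Euclidean space is pointwise. -/
private lemma euc_sum_apply {n : ℕ} {α : Type*} (s : Finset α) (f : α → Euc n) (c : Fin n) :
    (∑ a ∈ s, f a) c = ∑ a ∈ s, f a c := by
  induction s using Finset.cons_induction with
  | empty => simp [PiLp.zero_apply]
  | cons a s ha ih => simp [Finset.sum_cons, PiLp.add_apply, ih]

/-- **Lemma 15.** There is `c = c(k,d) > 0` such that for any orthonormal family `u₁,…,u_k`
in `ℝ^d` there exist a permutation `σ` of `{1,…,d}` and vectors `v_i ∈ span{e_{σ(j)} :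
j = k+1,…,d}` with `‖v_i‖_∞ ≤ c`, such that
`span{u₁,…,u_k} = span{e_{σ(1)}+v₁,…,e_{σ(k)}+v_k}`. -/
theorem span_lemma (k d : ℕ) (hk : 1 ≤ k) (hkd : k ≤ d) :
    ∃ c : ℝ, 0 < c ∧ ∀ u : Fin k → Euc d, Orthonormal ℝ u →
      ∃ σ : Equiv.Perm (Fin d), ∃ v : Fin k → Euc d,
        (∀ i, v i ∈ Submodule.span ℝ
            ((fun j : Fin d => EuclideanSpace.single (σ j) (1:ℝ)) '' {j | k ≤ (j:ℕ)}) ∧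
          supNorm (v i) ≤ c) ∧
        Submodule.span ℝ (Set.range u) =
          Submodule.span ℝ
            (Set.range fun i : Fin k => EuclideanSpace.single (σ (Fin.castLE hkd i)) 1 + v i) := by
  classical
  refine ⟨1, one_pos, ?_⟩
  intro u hu
  have hd : 0 < d := lt_of_lt_of_le hk hkd
  haveI : Nonempty (Fin d) := ⟨⟨0, hd⟩⟩
  set U : Matrix (Fin k) (Fin d) ℝ := Matrix.of fun i j => u i j with hUdef
  -- `U * Uᵀ = 1` by orthonormality
  have hUUt : U * Uᵀ = 1 := by
    ext i j
    have h := (orthonormal_iff_ite.mp hu) i j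
    simp only [PiLp.inner_apply, RCLike.inner_apply, conj_trivial] at h
    simpa [Matrix.mul_apply, Matrix.one_apply, hUdef, mul_comm] using h
  -- the columns of `U` span `ℝ^k`
  have hcolspan :
      Submodule.span ℝ (Set.range fun c : Fin d => (fun i => U i c : Fin k → ℝ)) = ⊤ := by
    rw [Submodule.eq_top_iff']
    intro x
    have key : ∀ y : Fin d → ℝ,
        U *ᵥ y = ∑ c, y c • (fun i => U i c : Fin k → ℝ) := by
      intro y; funext i
      simp [Matrix.mulVec, dotProduct, Finset.sum_apply, mul_comm]
    have hx : U *ᵥ (Uᵀ *ᵥ x) = x := by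
      rw [Matrix.mulVec_mulVec, hUUt, Matrix.one_mulVec]
    rw [← hx, key]
    exact Submodule.sum_mem _ fun c _ =>
      Submodule.smul_mem _ _ (Submodule.subset_span ⟨c, rfl⟩)
  -- extract `k` linearly independent columns
  obtain ⟨b, hb_sub, hb_span, hb_li⟩ :=
    exists_linearIndependent ℝ (Set.range fun c : Fin d => (fun i => U i c : Fin k → ℝ))
  have hbfin : b.Finite := hb_li.setFinite
  haveI := hbfin.fintype
  have hbcard : Fintype.card b = k := by
    have h1 := finrank_span_set_eq_card hb_li
    rw [hb_span, hcolspan, finrank_top] at h1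
    simp only [Set.toFinset_card] at h1
    rw [← h1]
    simp
  let e : Fin k ≃ b := (Fintype.equivFinOfCardEq hbcard).symm
  have he : ∀ j : Fin k, ∃ c : Fin d,
      (fun i => U i c : Fin k → ℝ) = ((e j : Fin k → ℝ)) := by
    intro j
    obtain ⟨c, hc⟩ := hb_sub (e j).2
    exact ⟨c, hc⟩
  choose ψ hψ using he
  have hψinj : Function.Injective ψ := by
    intro a a' haa
    have : ((e a : Fin k → ℝ)) = ((e a' : Fin k → ℝ)) := by
      rw [← hψ a, ← hψ a', haa]
    exact e.injective (Subtype.ext this)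
  have hψunit : IsUnit (U.submatrix id ψ) := by
    rw [← Matrix.linearIndependent_cols_iff_isUnit]
    have hcols : (fun j => (U.submatrix id ψ)ᵀ j) = fun j => ((e j : Fin k → ℝ)) := by
      funext j
      rw [← hψ j]
      rfl
    rw [show (U.submatrix id ψ).col = _ from hcols]
    exact hb_li.comp e e.injective
  have hψdet : (U.submatrix id ψ).det ≠ 0 := by
    have := (Matrix.isUnit_iff_isUnit_det _).mp hψunit
    exact this.ne_zero
  -- choose the submatrix with maximal |det|
  obtain ⟨φ, hφmax⟩ := Finite.exists_max fun ψ' : Fin k → Fin d => |(U.submatrix id ψ').det|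
  have hdetφ : (U.submatrix id φ).det ≠ 0 := by
    intro h0
    have h1 := hφmax ψ
    rw [h0, abs_zero] at h1
    exact hψdet (abs_eq_zero.mp (le_antisymm h1 (abs_nonneg _)))
  have hφinj : Function.Injective φ := by
    intro a a' haa
    by_contra hne
    exact hdetφ (Matrix.det_zero_of_column_eq hne (fun r => by
      simp [Matrix.submatrix_apply, haa]))
  -- extend `φ` to a permutation `σ` with `σ ∘ castLE = φ`
  let emb1 : Fin k ≃ Set.range (Fin.castLE hkd) :=
    Equiv.ofInjective _ (Fin.castLE_injective hkd)
  let emb2 : Fin k ≃ Set.range φ := Equiv.ofInjective φ hφinj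
  let eqv : {x : Fin d // x ∈ Set.range (Fin.castLE hkd)} ≃ {x : Fin d // x ∈ Set.range φ} :=
    emb1.trans (Equiv.refl _) |>.symm.trans emb2
  let σ : Equiv.Perm (Fin d) := eqv.extendSubtype
  have hσ : ∀ i : Fin k, σ (Fin.castLE hkd i) = φ i := by
    intro i
    have hm : Fin.castLE hkd i ∈ Set.range (Fin.castLE hkd) := ⟨i, rfl⟩
    rw [show σ (Fin.castLE hkd i) = ↑(eqv ⟨Fin.castLE hkd i, hm⟩) from
      Equiv.extendSubtype_apply_of_mem eqv _ hm]
    have h1 : (emb1.trans (Equiv.refl _)).symm ⟨Fin.castLE hkd i, hm⟩ = i := by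
      rw [Equiv.symm_apply_eq]
      rfl
    show ((emb2 ((emb1.trans (Equiv.refl _)).symm ⟨Fin.castLE hkd i, hm⟩)) : Fin d) = φ i
    rw [h1]
    rfl
  -- the matrix `B = M⁻¹ * U`
  set M : Matrix (Fin k) (Fin k) ℝ := U.submatrix id φ with hMdef
  have hMdet : IsUnit M.det := isUnit_iff_ne_zero.mpr hdetφ
  set B : Matrix (Fin k) (Fin d) ℝ := M⁻¹ * U with hBdef
  have hBδ : ∀ i j, B i (φ j) = (1 : Matrix (Fin k) (Fin k) ℝ) i j := by
    intro i j
    have h1 : B i (φ j) = (M⁻¹ * M) i j := by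
      simp [hBdef, Matrix.mul_apply, hMdef, Matrix.submatrix_apply]
    rw [h1, Matrix.nonsing_inv_mul _ hMdet]
  -- entries of `B` are bounded by 1
  have hBle : ∀ i c, |B i c| ≤ 1 := by
    intro i c
    have hmv : B i c = (M⁻¹ *ᵥ fun r => U r c) i := by
      simp [hBdef, Matrix.mul_apply, Matrix.mulVec, dotProduct]
    have hinv : M⁻¹ *ᵥ (fun r => U r c) =
        Ring.inverse M.det • (M.cramer fun r => U r c) := by
      rw [Matrix.inv_def, Matrix.smul_mulVec, Matrix.cramer_eq_adjugate_mulVec]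
    have hupd : M.updateCol i (fun r => U r c) =
        U.submatrix id (Function.update φ i c) := by
      ext r j
      by_cases hji : j = i
      · subst hji; simp [Matrix.updateCol_apply, Matrix.submatrix_apply]
      · simp [Matrix.updateCol_apply, Matrix.submatrix_apply, hji,
          Function.update_of_ne hji, hMdef]
    have hval : B i c =
        (M.det)⁻¹ * (U.submatrix id (Function.update φ i c)).det := by
      rw [hmv, hinv]
      simp only [Pi.smul_apply, smul_eq_mul, Matrix.cramer_apply, hupd,
        Ring.inverse_eq_inv']
    have hb1 := hφmax (Function.update φ i c)
    calc |B i c| = |M.det|⁻¹ * |(U.submatrix id (Function.update φ i c)).det| := by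
          rw [hval, abs_mul, abs_inv]
      _ ≤ |M.det|⁻¹ * |M.det| := by
          apply mul_le_mul_of_nonneg_left _ (inv_nonneg.mpr (abs_nonneg _))
          exact hb1
      _ = 1 := inv_mul_cancel₀ (abs_ne_zero.mpr hdetφ)
  -- the vectors
  set w : Fin k → Euc d := fun i => (WithLp.toLp 2 (fun c => B i c) : Euc d) with hwdef
  set v : Fin k → Euc d :=
    fun i => w i - EuclideanSpace.single (σ (Fin.castLE hkd i)) 1 with hvdef
  have hvc : ∀ i c, v i c =
      B i c - (if c = σ (Fin.castLE hkd i) then 1 else 0) := by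
    intro i c
    simp [hvdef, hwdef, PiLp.sub_apply, EuclideanSpace.single_apply]
  have hcond : ∀ i j : Fin k,
      (σ (Fin.castLE hkd j) = σ (Fin.castLE hkd i)) ↔ i = j := by
    intro i j
    constructor
    · intro h
      exact (Fin.castLE_injective hkd (σ.injective h)).symm
    · intro h; rw [h]
  have hvanish : ∀ i j, v i (σ (Fin.castLE hkd j)) = 0 := by
    intro i j
    rw [hvc, hσ j, hσ i, hBδ i j, Matrix.one_apply]
    by_cases h : i = j
    · subst h; simp
    · rw [if_neg h, if_neg fun hc => h (hφinj hc).symm, sub_zero]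
  have hsum_eq : ∀ i, EuclideanSpace.single (σ (Fin.castLE hkd i)) (1:ℝ) + v i = w i := by
    intro i
    show EuclideanSpace.single (σ (Fin.castLE hkd i)) (1:ℝ) +
      (w i - EuclideanSpace.single (σ (Fin.castLE hkd i)) 1) = w i
    abel
  -- membership in the span of the last coordinates
  have hmem : ∀ i, v i ∈ Submodule.span ℝ
      ((fun j : Fin d => EuclideanSpace.single (σ j) (1:ℝ)) '' {j | k ≤ (j:ℕ)}) := by
    intro i
    have hdecomp : v i = ∑ c : Fin d, v i c • EuclideanSpace.single c (1:ℝ) := by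
      have h := (EuclideanSpace.basisFun (Fin d) ℝ).sum_repr (v i)
      simp only [EuclideanSpace.basisFun_apply, EuclideanSpace.basisFun_repr] at h
      exact h.symm
    rw [hdecomp]
    apply Submodule.sum_mem
    intro c _
    rcases lt_or_ge ((σ.symm c : Fin d) : ℕ) k with hlt | hge
    · have hcc : c = σ (Fin.castLE hkd ⟨((σ.symm c : Fin d) : ℕ), hlt⟩) := by
        rw [show Fin.castLE hkd ⟨((σ.symm c : Fin d) : ℕ), hlt⟩ = σ.symm c from rfl,
          Equiv.apply_symm_apply]
      rw [hcc, hvanish, zero_smul]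
      exact Submodule.zero_mem _
    · refine Submodule.smul_mem _ _ (Submodule.subset_span ?_)
      exact ⟨σ.symm c, hge, by simp⟩
  -- sup-norm bound
  have hnorm : ∀ i, supNorm (v i) ≤ 1 := by
    intro i
    apply ciSup_le
    intro c
    rcases lt_or_ge ((σ.symm c : Fin d) : ℕ) k with hlt | hge
    · have hcc : c = σ (Fin.castLE hkd ⟨((σ.symm c : Fin d) : ℕ), hlt⟩) := by
        rw [show Fin.castLE hkd ⟨((σ.symm c : Fin d) : ℕ), hlt⟩ = σ.symm c from rfl,
          Equiv.apply_symm_apply]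
      rw [hcc, hvanish]
      simp
    · have hne : c ≠ σ (Fin.castLE hkd i) := by
        intro hc
        have : σ.symm c = Fin.castLE hkd i := by rw [hc, Equiv.symm_apply_apply]
        rw [this] at hge
        simp only [Fin.coe_castLE] at hge
        exact absurd (i.2) (not_lt.mpr hge)
      rw [hvc, if_neg hne, sub_zero]
      exact hBle i c
  refine ⟨σ, v, fun i => ⟨hmem i, hnorm i⟩, ?_⟩
  -- the span equality
  have hw_eq : (fun i : Fin k =>
      EuclideanSpace.single (σ (Fin.castLE hkd i)) (1:ℝ) + v i) = w :=
    funext fun i => hsum_eq i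
  rw [hw_eq]
  have hMB : M * B = U := by
    rw [hBdef, ← Matrix.mul_assoc, Matrix.mul_nonsing_inv _ hMdet, Matrix.one_mul]
  apply le_antisymm
  · rw [Submodule.span_le]
    rintro _ ⟨i, rfl⟩
    have hui : u i = ∑ j, M i j • w j := by
      ext c
      rw [euc_sum_apply]
      simp only [PiLp.smul_apply, smul_eq_mul]
      have h1 : ∑ j, M i j * w j c = (M * B) i c := by
        rw [Matrix.mul_apply]
      rw [h1, hMB]
      rfl
    rw [hui]
    exact Submodule.sum_mem _ fun j _ =>
      Submodule.smul_mem _ _ (Submodule.subset_span ⟨j, rfl⟩)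
  · rw [Submodule.span_le]
    rintro _ ⟨i, rfl⟩
    have hwi : w i = ∑ j, M⁻¹ i j • u j := by
      ext c
      rw [euc_sum_apply]
      simp only [PiLp.smul_apply, smul_eq_mul]
      have h1 : ∑ j, M⁻¹ i j * u j c = (M⁻¹ * U) i c := by
        rw [Matrix.mul_apply]
        rfl
      rw [h1, ← hBdef]
    rw [hwi]
    exact Submodule.sum_mem _ fun j _ =>
      Submodule.smul_mem _ _ (Submodule.subset_span ⟨j, rfl⟩)

end
end
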